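/- arXiv:2205.04128 — 5 statements merged into one kernel-verified Lean document; each statement's English description precedes it below -/
import Mathlib

section
/- There exist additive complements A and B (infinite sets of non-negative integers) such that limsup_{x→+∞} A(x)B(x)/x = 2 and A(x)B(x) − x = 1 for infinitely many positive integers x. -/
open Filter

/-- The counting function of a set `A` of non-negative integers:
`countBelow A x = #{a ∈ A : a ≤ x}`. -/
noncomputable def countBelow (A : Set ℕ) (x : ℕ) : ℕ := (A ∩ Set.Iic x).ncard

/-- Two infinite sets of non-negative integers are additive complements if
their sumset contains all sufficiently large integers. -/
def AddComp (A B : Set ℕ) : Prop :=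
  A.Infinite ∧ B.Infinite ∧ ∀ᶠ n in atTop, ∃ a ∈ A, ∃ b ∈ B, a + b = n

open Filter Finset

noncomputable section AuxCF

/-- positions reserved for `B`: powers of two `2^j` with `j ≥ 1`. -/
def Pb (i : ℕ) : Prop := ∃ j, 1 ≤ j ∧ i = 2 ^ j

instance : DecidablePred Pb := fun _ => Classical.dec _

/-- the finset of binary digits of `n` -/
def bits (n : ℕ) : Finset ℕ := n.bitIndices.toFinset

lemma sum_bits (n : ℕ) : ∑ i ∈ bits n, 2 ^ i = n := Finset.twoPowSum_toFinset_bitIndices n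

lemma bits_sum (s : Finset ℕ) : bits (∑ i ∈ s, 2 ^ i) = s := Finset.toFinset_bitIndices_twoPowSum s

lemma sum_two_pow_inj : Function.Injective (fun s : Finset ℕ => ∑ i ∈ s, 2 ^ i) :=
  Finset.geomSum_injective le_rfl

lemma sum_range_two_pow (m : ℕ) : ∑ i ∈ range m, 2 ^ i = 2 ^ m - 1 := by
  induction m with
  | zero => simp
  | succ n ih =>
    rw [Finset.sum_range_succ, ih]
    have : 1 ≤ 2 ^ n := Nat.one_le_two_pow
    have : 2 ^ (n+1) = 2 ^ n * 2 := by ring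
    omega

lemma bits_subset_range {n m : ℕ} (h : n < 2 ^ m) : bits n ⊆ range m := by
  intro i hi
  have h2 : 2 ^ i ≤ n := Nat.two_pow_le_of_mem_bitIndices (List.mem_toFinset.1 hi)
  have : 2 ^ i < 2 ^ m := lt_of_le_of_lt h2 h
  simpa using (Nat.pow_lt_pow_iff_right (by norm_num)).1 this

lemma le_of_bits_subset {n m : ℕ} (h : bits n ⊆ bits m) : n ≤ m := by
  calc n = ∑ i ∈ bits n, 2 ^ i := (sum_bits n).symm
  _ ≤ ∑ i ∈ bits m, 2 ^ i := Finset.sum_le_sum_of_subset h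
  _ = m := sum_bits m

/-- A : numbers none of whose digits is in Pb -/
def SA : Set ℕ := {n | ∀ i ∈ bits n, ¬ Pb i}
def SB : Set ℕ := {n | ∀ i ∈ bits n, Pb i}

lemma decomp (n : ℕ) : ∃ a ∈ SA, ∃ b ∈ SB, a + b = n := by
  refine ⟨∑ i ∈ (bits n).filter (fun i => ¬ Pb i), 2 ^ i, ?_, ∑ i ∈ (bits n).filter Pb, 2 ^ i, ?_, ?_⟩
  · intro i hi
    rw [bits_sum] at hi
    exact (Finset.mem_filter.1 hi).2
  · intro i hi
    rw [bits_sum] at hi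
    exact (Finset.mem_filter.1 hi).2
  · rw [add_comm, Finset.sum_filter_add_sum_filter_not]
    exact sum_bits n

lemma unique_decomp {a b a' b' : ℕ} (ha : a ∈ SA) (hb : b ∈ SB) (ha' : a' ∈ SA) (hb' : b' ∈ SB)
    (h : a + b = a' + b') : a = a' ∧ b = b' := by
  have key : ∀ x y : ℕ, x ∈ SA → y ∈ SB → x + y = ∑ i ∈ bits x ∪ bits y, 2 ^ i ∧
      (bits x ∪ bits y).filter (fun i => ¬ Pb i) = bits x ∧
      (bits x ∪ bits y).filter Pb = bits y := by
    intro x y hx hy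
    have hdisj : Disjoint (bits x) (bits y) := by
      rw [Finset.disjoint_left]
      intro i hix hiy
      exact hx i hix (hy i hiy)
    constructor
    · rw [Finset.sum_union hdisj, sum_bits, sum_bits]
    constructor
    · rw [Finset.filter_union]
      rw [Finset.filter_true_of_mem hx, Finset.filter_false_of_mem (fun i h => not_not.2 (hy i h)),
        Finset.union_empty]
    · rw [Finset.filter_union]
      rw [Finset.filter_false_of_mem (fun i h hP => hx i h hP), Finset.filter_true_of_mem hy,
        Finset.empty_union]
  obtain ⟨h1, h2, h3⟩ := key a b ha hb
  obtain ⟨h1', h2', h3'⟩ := key a' b' ha' hb'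
  rw [h1, h1'] at h
  have hu : bits a ∪ bits b = bits a' ∪ bits b' := sum_two_pow_inj h
  constructor
  · have := h2.symm.trans (hu ▸ h2')
    calc a = ∑ i ∈ bits a, 2 ^ i := (sum_bits a).symm
    _ = ∑ i ∈ bits a', 2 ^ i := by rw [← h2, hu, h2']
    _ = a' := sum_bits a'
  · calc b = ∑ i ∈ bits b, 2 ^ i := (sum_bits b).symm
    _ = ∑ i ∈ bits b', 2 ^ i := by rw [← h3, hu, h3']
    _ = b' := sum_bits b'

end AuxCF

noncomputable section Aux2
open Finset

variable (Q : ℕ → Prop) [DecidablePred Q]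

def SQ : Set ℕ := {n | ∀ i ∈ bits n, Q i}

lemma mem_SQ_inter_iff {m n : ℕ} :
    n ∈ SQ Q ∩ Set.Iic (2 ^ m - 1) ↔ bits n ⊆ (range m).filter Q := by
  have h2m : 1 ≤ 2 ^ m := Nat.one_le_two_pow
  constructor
  · rintro ⟨h1, h2⟩
    intro i hi
    exact Finset.mem_filter.2 ⟨bits_subset_range (by simp at h2; omega) hi, h1 i hi⟩
  · intro h
    refine ⟨fun i hi => (Finset.mem_filter.1 (h hi)).2, ?_⟩
    have : bits n ⊆ range m := h.trans (Finset.filter_subset _ _)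
    have : n ≤ 2 ^ m - 1 := by
      calc n = ∑ i ∈ bits n, 2 ^ i := (sum_bits n).symm
      _ ≤ ∑ i ∈ range m, 2 ^ i := Finset.sum_le_sum_of_subset this
      _ = 2 ^ m - 1 := sum_range_two_pow m
    exact this

lemma SQ_inter_eq (m : ℕ) :
    SQ Q ∩ Set.Iic (2 ^ m - 1) =
      ↑(((range m).filter Q).powerset.image (fun t => ∑ i ∈ t, 2 ^ i)) := by
  ext n
  rw [Finset.coe_image, Set.mem_image, mem_SQ_inter_iff]
  constructor
  · intro h
    exact ⟨bits n, Finset.mem_powerset.2 h, sum_bits n⟩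
  · rintro ⟨t, ht, rfl⟩
    rw [bits_sum]
    exact Finset.mem_powerset.1 ht

lemma SQ_ncard (m : ℕ) :
    (SQ Q ∩ Set.Iic (2 ^ m - 1)).ncard = 2 ^ ((range m).filter Q).card := by
  rw [SQ_inter_eq, Set.ncard_coe_finset,
    Finset.card_image_of_injective _ sum_two_pow_inj, Finset.card_powerset]

lemma SQ_le_max {m n : ℕ} (h : n ∈ SQ Q ∩ Set.Iic (2 ^ m - 1)) :
    n ≤ ∑ i ∈ (range m).filter Q, 2 ^ i := by
  rw [mem_SQ_inter_iff] at h
  calc n = ∑ i ∈ bits n, 2 ^ i := (sum_bits n).symm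
  _ ≤ _ := Finset.sum_le_sum_of_subset h

end Aux2

noncomputable section Aux3
open Finset

def fA (n : ℕ) : ℕ := ∑ i ∈ (bits n).filter (fun i => ¬ Pb i), 2 ^ i
def fB (n : ℕ) : ℕ := ∑ i ∈ (bits n).filter Pb, 2 ^ i

lemma fA_mem (n : ℕ) : fA n ∈ SA := by
  intro i hi; rw [fA, bits_sum] at hi; exact (Finset.mem_filter.1 hi).2

lemma fB_mem (n : ℕ) : fB n ∈ SB := by
  intro i hi; rw [fB, bits_sum] at hi; exact (Finset.mem_filter.1 hi).2

lemma fA_add_fB (n : ℕ) : fA n + fB n = n := by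
  rw [fA, fB, add_comm, Finset.sum_filter_add_sum_filter_not]
  exact sum_bits n

attribute [local instance] Classical.propDecidable

/-- Finset counting versions -/
def FA (x : ℕ) : Finset ℕ := (Finset.Iic x).filter (· ∈ SA)
def FB (x : ℕ) : Finset ℕ := (Finset.Iic x).filter (· ∈ SB)

lemma FA_coe (x : ℕ) : (FA x : Set ℕ) = SA ∩ Set.Iic x := by
  ext n
  simp only [FA, Finset.coe_filter, Finset.mem_Iic, Set.mem_setOf_eq, Set.mem_inter_iff,
    Set.mem_Iic]
  exact and_comm

lemma FB_coe (x : ℕ) : (FB x : Set ℕ) = SB ∩ Set.Iic x := by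
  ext n
  simp only [FB, Finset.coe_filter, Finset.mem_Iic, Set.mem_setOf_eq, Set.mem_inter_iff,
    Set.mem_Iic]
  exact and_comm

lemma countA_eq (x : ℕ) : (SA ∩ Set.Iic x).ncard = (FA x).card := by
  rw [← FA_coe, Set.ncard_coe_finset]

lemma countB_eq (x : ℕ) : (SB ∩ Set.Iic x).ncard = (FB x).card := by
  rw [← FB_coe, Set.ncard_coe_finset]

lemma upper_bound (x : ℕ) : (FA x).card * (FB x).card ≤ 2 * x + 1 := by
  have h1 : ((FA x) ×ˢ (FB x)).card = (FA x).card * (FB x).card := Finset.card_product _ _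
  rw [← h1]
  have h2 : (((FA x) ×ˢ (FB x)).image (fun p => p.1 + p.2)).card = ((FA x) ×ˢ (FB x)).card := by
    apply Finset.card_image_of_injOn
    rintro ⟨a, b⟩ hab ⟨a', b'⟩ hab' h
    simp only [Finset.mem_coe, Finset.mem_product, FA, FB, Finset.mem_filter] at hab hab'
    have := unique_decomp hab.1.2 hab.2.2 hab'.1.2 hab'.2.2 h
    exact Prod.ext this.1 this.2
  rw [← h2]
  have h3 : (((FA x) ×ˢ (FB x)).image (fun p => p.1 + p.2)) ⊆ Finset.Iic (2 * x) := by
    intro n hn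
    simp only [Finset.mem_image, Finset.mem_product, FA, FB, Finset.mem_filter,
      Finset.mem_Iic] at hn ⊢
    obtain ⟨⟨a, b⟩, ⟨⟨ha, _⟩, ⟨hb, _⟩⟩, rfl⟩ := hn
    omega
  calc _ ≤ (Finset.Iic (2 * x)).card := Finset.card_le_card h3
  _ = 2 * x + 1 := Nat.card_Iic _

lemma lower_bound (x : ℕ) : x + 1 ≤ (FA x).card * (FB x).card := by
  have h1 : ((FA x) ×ˢ (FB x)).card = (FA x).card * (FB x).card := Finset.card_product _ _
  rw [← h1]
  have key := Finset.card_le_card_of_injOn (s := Finset.Iic x) (t := (FA x) ×ˢ (FB x))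
    (fun n => (fA n, fB n)) ?_ ?_
  · simpa using key
  · intro n hn
    simp only [Finset.mem_coe, Finset.mem_Iic] at hn
    have hsum := fA_add_fB n
    simp only [Finset.mem_coe, Finset.mem_product, FA, FB, Finset.mem_filter, Finset.mem_Iic]
    exact ⟨⟨by omega, fA_mem n⟩, ⟨by omega, fB_mem n⟩⟩
  · intro n _ n' _ h
    have h1 := fA_add_fB n
    have h2 := fA_add_fB n'
    simp only [Prod.mk.injEq] at h
    omega

end Aux3

noncomputable section Aux4
open Finset

attribute [local instance] Classical.propDecidable

lemma count_prod_pow (m : ℕ) : (FA (2 ^ m - 1)).card * (FB (2 ^ m - 1)).card = 2 ^ m := by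
  have hA : (FA (2 ^ m - 1)).card = 2 ^ ((range m).filter (fun i => ¬ Pb i)).card := by
    rw [← countA_eq]; exact SQ_ncard (fun i => ¬ Pb i) m
  have hB : (FB (2 ^ m - 1)).card = 2 ^ ((range m).filter Pb).card := by
    rw [← countB_eq]; exact SQ_ncard Pb m
  rw [hA, hB, ← pow_add]
  congr 1
  rw [add_comm]
  calc ((range m).filter Pb).card + ((range m).filter (fun i => ¬ Pb i)).card
      = (range m).card := Finset.card_filter_add_card_filter_not (fun i => Pb i)
  _ = m := Finset.card_range m

def yk (k : ℕ) : ℕ := ∑ i ∈ (range (2 ^ k + 1)).filter Pb, 2 ^ i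

lemma yk_ge {k : ℕ} (hk : 1 ≤ k) : 2 ^ (2 ^ k) ≤ yk k := by
  apply Finset.single_le_sum (f := fun i => 2 ^ i) (fun i _ => Nat.zero_le _)
  refine Finset.mem_filter.2 ⟨Finset.mem_range.2 (by omega), ⟨k, hk, rfl⟩⟩

lemma aster_add (k : ℕ) :
    yk k + (∑ i ∈ (range (2 ^ k + 1)).filter (fun i => ¬ Pb i), 2 ^ i) = 2 ^ (2 ^ k + 1) - 1 := by
  rw [yk, Finset.sum_filter_add_sum_filter_not, sum_range_two_pow]

lemma yk_le_max (k : ℕ) : yk k ≤ 2 ^ (2 ^ k + 1) - 1 := by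
  have := aster_add k; omega

lemma aster_le_yk {k : ℕ} (hk : 1 ≤ k) :
    (∑ i ∈ (range (2 ^ k + 1)).filter (fun i => ¬ Pb i), 2 ^ i) ≤ yk k := by
  have h1 := aster_add k
  have h2 := yk_ge hk
  have h3 : 2 ^ (2 ^ k + 1) = 2 * 2 ^ (2 ^ k) := by ring
  omega

lemma FA_yk {k : ℕ} (hk : 1 ≤ k) : FA (yk k) = FA (2 ^ (2 ^ k + 1) - 1) := by
  ext n
  simp only [FA, Finset.mem_filter, Finset.mem_Iic]
  constructor
  · rintro ⟨h1, h2⟩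
    exact ⟨le_trans h1 (yk_le_max k), h2⟩
  · rintro ⟨h1, h2⟩
    refine ⟨?_, h2⟩
    have := SQ_le_max (fun i => ¬ Pb i) (m := 2 ^ k + 1) (n := n) ⟨h2, Set.mem_Iic.2 h1⟩
    exact le_trans this (aster_le_yk hk)

lemma FB_yk (k : ℕ) : FB (yk k) = FB (2 ^ (2 ^ k + 1) - 1) := by
  ext n
  simp only [FB, Finset.mem_filter, Finset.mem_Iic]
  constructor
  · rintro ⟨h1, h2⟩
    exact ⟨le_trans h1 (yk_le_max k), h2⟩
  · rintro ⟨h1, h2⟩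
    exact ⟨SQ_le_max Pb (m := 2 ^ k + 1) (n := n) ⟨h2, Set.mem_Iic.2 h1⟩, h2⟩

lemma count_at_yk {k : ℕ} (hk : 1 ≤ k) :
    (FA (yk k)).card * (FB (yk k)).card = 2 ^ (2 ^ k + 1) := by
  rw [FA_yk hk, FB_yk k, count_prod_pow]

lemma filter_Pb_eq (k : ℕ) :
    (range (2 ^ k + 1)).filter Pb = (Finset.Icc 1 k).image (fun j => 2 ^ j) := by
  ext i
  simp only [Finset.mem_filter, Finset.mem_range, Finset.mem_image, Finset.mem_Icc]
  constructor
  · rintro ⟨hlt, j, hj, rfl⟩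
    refine ⟨j, ⟨hj, ?_⟩, rfl⟩
    by_contra h
    have : 2 ^ (k + 1) ≤ 2 ^ j := Nat.pow_le_pow_right (by norm_num) (by omega)
    have : 2 ^ k < 2 ^ (k + 1) := Nat.pow_lt_pow_right (by norm_num) (by omega)
    omega
  · rintro ⟨j, ⟨hj1, hj2⟩, rfl⟩
    have : 2 ^ j ≤ 2 ^ k := Nat.pow_le_pow_right (by norm_num) hj2
    exact ⟨by omega, j, hj1, rfl⟩

lemma yk_eq_sum (k : ℕ) : yk k = ∑ j ∈ Finset.Icc 1 k, 2 ^ (2 ^ j) := by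
  rw [yk, filter_Pb_eq, Finset.sum_image]
  intro a _ b _ h
  exact Nat.pow_right_injective (by norm_num) h

lemma yk_le {k : ℕ} (hk : 1 ≤ k) : yk k ≤ 2 ^ (2 ^ k) + k * 2 ^ (2 ^ (k - 1)) := by
  rw [yk_eq_sum]
  have hsplit : Finset.Icc 1 k = insert k (Finset.Icc 1 (k - 1)) := by
    ext j
    simp only [Finset.mem_insert, Finset.mem_Icc]
    omega
  rw [hsplit, Finset.sum_insert (by simp; omega)]
  have hbound : ∑ j ∈ Finset.Icc 1 (k - 1), 2 ^ (2 ^ j) ≤ (k - 1) * 2 ^ (2 ^ (k - 1)) := by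
    calc ∑ j ∈ Finset.Icc 1 (k - 1), 2 ^ (2 ^ j)
        ≤ ∑ _j ∈ Finset.Icc 1 (k - 1), 2 ^ (2 ^ (k - 1)) := by
          apply Finset.sum_le_sum
          intro j hj
          exact Nat.pow_le_pow_right (by norm_num)
            (Nat.pow_le_pow_right (by norm_num) (Finset.mem_Icc.1 hj).2)
      _ = (k - 1) * 2 ^ (2 ^ (k - 1)) := by
          rw [Finset.sum_const, Nat.card_Icc]
          simp [smul_eq_mul]
  have : (k - 1) * 2 ^ (2 ^ (k - 1)) ≤ k * 2 ^ (2 ^ (k - 1)) :=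
    Nat.mul_le_mul_right _ (by omega)
  omega

lemma yk_strictMono : StrictMono yk := by
  have h : ∀ k, yk k < yk (k + 1) := by
    intro k
    have h1 : yk k ≤ 2 ^ (2 ^ k + 1) - 1 := yk_le_max k
    have h2 : 2 ^ (2 ^ (k + 1)) ≤ yk (k + 1) := yk_ge (by omega)
    have h3 : 2 ^ k + 1 ≤ 2 ^ (k + 1) := by
      have : 2 ^ (k + 1) = 2 * 2 ^ k := by ring
      have : 1 ≤ 2 ^ k := Nat.one_le_two_pow
      omega
    have h4 : 2 ^ (2 ^ k + 1) ≤ 2 ^ (2 ^ (k + 1)) := Nat.pow_le_pow_right (by norm_num) h3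
    have h5 : (1:ℕ) ≤ 2 ^ (2 ^ k + 1) := Nat.one_le_two_pow
    omega
  exact strictMono_nat_of_lt_succ h

end Aux4

noncomputable section Aux5
open Finset Filter

/-- the ratio function -/
def F (x : ℕ) : ℝ := ((FA x).card : ℝ) * ((FB x).card : ℝ) / x

lemma F_le {x : ℕ} (hx : 1 ≤ x) : F x ≤ 2 + 1 / x := by
  have hub := upper_bound x
  have hxR : (0:ℝ) < x := by exact_mod_cast hx
  rw [F, div_le_iff₀ hxR]
  have h2 : ((FA x).card : ℝ) * ((FB x).card : ℝ) ≤ 2 * x + 1 := by exact_mod_cast hub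
  calc ((FA x).card : ℝ) * ((FB x).card : ℝ) ≤ 2 * x + 1 := h2
  _ = (2 + 1 / x) * x := by field_simp

lemma F_nonneg (x : ℕ) : 0 ≤ F x := by
  apply div_nonneg _ (by positivity)
  positivity

lemma yk_pos {k : ℕ} (hk : 1 ≤ k) : 0 < yk k :=
  lt_of_lt_of_le (by positivity) (yk_ge hk)

lemma F_yk {k : ℕ} (hk : 1 ≤ k) : F (yk k) = (2:ℝ) ^ (2 ^ k + 1) / (yk k : ℝ) := by
  rw [F]
  congr 1
  exact_mod_cast count_at_yk hk

lemma nat_ineq {k : ℕ} (hk : 1 ≤ k) :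
    yk k * 2 ^ k ≤ 2 ^ (2 ^ k) * 2 ^ k + k * 2 ^ (2 ^ k) := by
  have h1 := yk_le hk
  have h2 : 2 ^ (k - 1) + k ≤ 2 ^ k := by
    have h3 : k - 1 < 2 ^ (k - 1) := Nat.lt_two_pow_self
    have h4 : 2 ^ k = 2 * 2 ^ (k - 1) := by
      rw [← pow_succ']
      congr 1
      omega
    omega
  have h5 : 2 ^ (2 ^ (k - 1)) * 2 ^ k ≤ 2 ^ (2 ^ k) := by
    rw [← pow_add]
    exact Nat.pow_le_pow_right (by norm_num) h2
  calc yk k * 2 ^ k ≤ (2 ^ (2 ^ k) + k * 2 ^ (2 ^ (k - 1))) * 2 ^ k :=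
        Nat.mul_le_mul_right _ h1
  _ = 2 ^ (2 ^ k) * 2 ^ k + k * (2 ^ (2 ^ (k - 1)) * 2 ^ k) := by ring
  _ ≤ 2 ^ (2 ^ k) * 2 ^ k + k * 2 ^ (2 ^ k) := by
      have := Nat.mul_le_mul_left k h5
      omega

lemma yk_le_D {k : ℕ} (hk : 1 ≤ k) :
    (yk k : ℝ) ≤ 2 ^ (2 ^ k) * (1 + k * (1/2) ^ k) := by
  have h2k : (0:ℝ) < 2 ^ k := by positivity
  rw [← mul_le_mul_iff_of_pos_right h2k]
  have hcast : (yk k : ℝ) * 2 ^ k ≤ 2 ^ (2 ^ k) * 2 ^ k + k * 2 ^ (2 ^ k) := by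
    exact_mod_cast nat_ineq hk
  calc (yk k : ℝ) * 2 ^ k ≤ 2 ^ (2 ^ k) * 2 ^ k + k * 2 ^ (2 ^ k) := hcast
  _ = 2 ^ (2 ^ k) * (1 + k * (1/2) ^ k) * 2 ^ k := by
      have : ((1:ℝ)/2) ^ k * 2 ^ k = 1 := by
        rw [div_pow, one_pow, div_mul_cancel₀]
        positivity
      field_simp
      linear_combination (-(k:ℝ)) * this
  _ = _ := rfl

lemma G_lower {k : ℕ} (hk : 1 ≤ k) :
    2 / (1 + k * (1/2) ^ k) ≤ (2:ℝ) ^ (2 ^ k + 1) / (yk k : ℝ) := by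
  have hD : (0:ℝ) < 1 + k * (1/2) ^ k := by positivity
  have hyk : (0:ℝ) < yk k := by exact_mod_cast yk_pos hk
  have h1 : 2 / (1 + k * (1/2) ^ k)
      = (2:ℝ) ^ (2 ^ k + 1) / (2 ^ (2 ^ k) * (1 + k * (1/2) ^ k)) := by
    rw [pow_succ]
    rw [div_eq_div_iff hD.ne' (by positivity)]
    ring
  rw [h1]
  apply div_le_div_of_nonneg_left (by positivity) hyk (yk_le_D hk)

lemma G_upper {k : ℕ} (hk : 1 ≤ k) : (2:ℝ) ^ (2 ^ k + 1) / (yk k : ℝ) ≤ 2 := by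
  have hyk : (0:ℝ) < yk k := by exact_mod_cast yk_pos hk
  rw [div_le_iff₀ hyk, pow_succ]
  have : (2:ℝ) ^ (2 ^ k) ≤ yk k := by exact_mod_cast yk_ge hk
  nlinarith

lemma tendsto_G : Tendsto (fun k : ℕ => (2:ℝ) ^ (2 ^ k + 1) / (yk k : ℝ)) atTop (nhds 2) := by
  have hlow : Tendsto (fun k : ℕ => 2 / (1 + k * (1/2 : ℝ) ^ k)) atTop (nhds 2) := by
    have h0 : Tendsto (fun k : ℕ => (k : ℝ) * (1/2) ^ k) atTop (nhds 0) :=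
      tendsto_self_mul_const_pow_of_lt_one (by norm_num) (by norm_num)
    have h1 : Tendsto (fun k : ℕ => 1 + (k : ℝ) * (1/2) ^ k) atTop (nhds 1) := by
      have := tendsto_const_nhds (x := (1:ℝ)) (f := atTop (α := ℕ)) |>.add h0
      simpa using this
    have := (tendsto_const_nhds (x := (2:ℝ)) (f := atTop (α := ℕ))).div h1 (by norm_num)
    simpa [Pi.div_def] using this
  apply tendsto_of_tendsto_of_tendsto_of_le_of_le' hlow tendsto_const_nhds
  · filter_upwards [eventually_ge_atTop 1] with k hk
    exact G_lower hk
  · filter_upwards [eventually_ge_atTop 1] with k hk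
    exact G_upper hk

lemma tendsto_F_yk : Tendsto (fun k : ℕ => F (yk k)) atTop (nhds 2) := by
  apply tendsto_G.congr'
  filter_upwards [eventually_ge_atTop 1] with k hk
  exact (F_yk hk).symm

lemma tendsto_yk_atTop : Tendsto yk atTop atTop := yk_strictMono.tendsto_atTop

lemma F_bddAbove : IsBoundedUnder (· ≤ ·) atTop F := by
  apply isBoundedUnder_of_eventually_le (a := 3)
  filter_upwards [eventually_ge_atTop 1] with x hx
  have := F_le hx
  have h1 : (1:ℝ) / x ≤ 1 := by
    rw [div_le_one (by exact_mod_cast hx)]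
    exact_mod_cast hx
  linarith

lemma limsup_F_eq : limsup F atTop = 2 := by
  apply le_antisymm
  · -- upper bound
    have hle : F ≤ᶠ[atTop] (fun x : ℕ => 2 + 1 / (x:ℝ)) := by
      filter_upwards [eventually_ge_atTop 1] with x hx
      exact F_le hx
    have htend : Tendsto (fun x : ℕ => 2 + 1 / (x:ℝ)) atTop (nhds 2) := by
      have := tendsto_const_nhds (x := (2:ℝ)) (f := atTop (α := ℕ)) |>.add
        tendsto_one_div_atTop_nhds_zero_nat
      simpa using this
    calc limsup F atTop ≤ limsup (fun x : ℕ => 2 + 1 / (x:ℝ)) atTop :=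
          limsup_le_limsup hle
            ((isBoundedUnder_of (r := (· ≥ ·)) ⟨0, fun x => F_nonneg x⟩).isCoboundedUnder_le)
            htend.isBoundedUnder_le
    _ = 2 := htend.limsup_eq
  · -- lower bound
    have key : ∀ ε > (0:ℝ), 2 - ε ≤ limsup F atTop := by
      intro ε hε
      apply le_limsup_of_frequently_le _ F_bddAbove
      have hev : ∀ᶠ k in atTop, 2 - ε ≤ F (yk k) := by
        exact tendsto_F_yk.eventually (eventually_ge_nhds (by linarith))
      exact tendsto_yk_atTop.frequently hev.frequently
    by_contra h
    push_neg at h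
    have h2 : (2 - limsup F atTop) / 2 > 0 := by linarith
    have := key _ h2
    linarith

end Aux5

section Main
open Finset Filter

lemma bits_two_pow (i : ℕ) : bits (2 ^ i) = {i} := by
  have := bits_sum {i}
  simpa using this

lemma SA_infinite : SA.Infinite := by
  apply Set.infinite_of_injective_forall_mem (f := fun j : ℕ => 2 ^ (2 * j + 3))
    (hi := ?_) (hf := ?_)
  · intro a b h
    simp only at h
    have := Nat.pow_right_injective (le_refl 2) h
    omega
  · intro j
    intro i hi
    rw [bits_two_pow] at hi
    simp only [Finset.mem_singleton] at hi
    subst hi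
    rintro ⟨l, hl, heq⟩
    have : 2 ∣ 2 ^ l := dvd_pow_self 2 (by omega)
    omega

lemma SB_infinite : SB.Infinite := by
  apply Set.infinite_of_injective_forall_mem (f := fun j : ℕ => 2 ^ (2 ^ (j + 1)))
    (hi := ?_) (hf := ?_)
  · intro a b h
    simp only at h
    have h1 := Nat.pow_right_injective (le_refl 2) h
    have h2 := Nat.pow_right_injective (le_refl 2) h1
    omega
  · intro j
    intro i hi
    rw [bits_two_pow] at hi
    simp only [Finset.mem_singleton] at hi
    subst hi
    exact ⟨j + 1, by omega, rfl⟩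

end Main


theorem stmt0 :
    ∃ A B : Set ℕ, AddComp A B ∧
      limsup (fun x : ℕ => ((countBelow A x : ℝ) * countBelow B x) / x) atTop = 2 ∧
      {x : ℕ | 0 < x ∧ countBelow A x * countBelow B x = x + 1}.Infinite := by
  refine ⟨SA, SB, ⟨SA_infinite, SB_infinite, Eventually.of_forall decomp⟩, ?_, ?_⟩
  · have hfun : (fun x : ℕ => ((countBelow SA x : ℝ) * countBelow SB x) / x) = F := by
      funext x
      rw [countBelow, countBelow, countA_eq, countB_eq, F]
    rw [hfun]
    exact limsup_F_eq
  · apply Set.infinite_of_injective_forall_mem (f := fun m : ℕ => 2 ^ (m + 1) - 1)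
      (hi := ?_) (hf := ?_)
    · intro a b h
      simp only at h
      have h1 : (1:ℕ) ≤ 2 ^ (a + 1) := Nat.one_le_two_pow
      have h2 : (1:ℕ) ≤ 2 ^ (b + 1) := Nat.one_le_two_pow
      have h3 : (2:ℕ) ^ (a + 1) = 2 ^ (b + 1) := by omega
      have := Nat.pow_right_injective (le_refl 2) h3
      omega
    · intro m
      simp only [Set.mem_setOf_eq]
      have h1 : (2:ℕ) ≤ 2 ^ (m + 1) := by
        calc (2:ℕ) = 2 ^ 1 := rfl
        _ ≤ 2 ^ (m + 1) := Nat.pow_le_pow_right (by norm_num) (by omega)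
      constructor
      · omega
      · rw [countBelow, countBelow, countA_eq, countB_eq, count_prod_pow]
        omega
end

section
/- For any sequence {b_j} of positive integers with b_0 = 1 and b_j ≥ 2 for all j ≥ 1, there exist additive complements A and B such that limsup_{x→+∞} A(x)B(x)/x = limsup_{k→+∞} 2/(1 + D_k), where D_k = Σ_{i=0}^{k−1} (−1)^i (Π_{j=0}^{i} b_{k−j})^{−1}, and A(x)B(x) − x = 1 for infinitely many positive integers x. -/
open Filter

/-- `Dk b k = Σ_{i=0}^{k-1} (-1)^i (Π_{j=0}^{i} b_{k-j})⁻¹`. -/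
noncomputable def Dk (b : ℕ → ℕ) (k : ℕ) : ℝ :=
  ∑ i ∈ Finset.range k, (-1 : ℝ) ^ i * (∏ j ∈ Finset.range (i + 1), (b (k - j) : ℝ))⁻¹

namespace FC

def mseq (b : ℕ → ℕ) : ℕ → ℕ
  | 0 => 1
  | (k+1) => mseq b k * b (k+1)

def sseq (b : ℕ → ℕ) : ℕ → ℕ
  | 0 => 0
  | (k+1) => mseq b k - sseq b k

def Good (b : ℕ → ℕ) : Prop := ∀ j, 1 ≤ j → 2 ≤ b j

variable {b : ℕ → ℕ}

lemma two_mul_m_le (hb : Good b) (k : ℕ) : 2 * mseq b k ≤ mseq b (k+1) := by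
  have : 2 ≤ b (k+1) := hb _ (Nat.le_add_left 1 k)
  calc 2 * mseq b k = mseq b k * 2 := by ring
  _ ≤ mseq b k * b (k+1) := Nat.mul_le_mul_left _ this
  _ = mseq b (k+1) := rfl

lemma m_pos (hb : Good b) (k : ℕ) : 0 < mseq b k := by
  induction k with
  | zero => exact Nat.one_pos
  | succ k ih => calc 0 < 2 * mseq b k := by omega
                   _ ≤ mseq b (k+1) := two_mul_m_le hb k

lemma m_lt_succ (hb : Good b) (k : ℕ) : mseq b k < mseq b (k+1) := by
  have h1 := m_pos hb k
  have := two_mul_m_le hb k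
  omega

lemma m_mono (hb : Good b) : Monotone (mseq b) :=
  monotone_nat_of_le_succ (fun k => (m_lt_succ hb k).le)

lemma m_strictMono (hb : Good b) : StrictMono (mseq b) :=
  strictMono_nat_of_lt_succ (m_lt_succ hb)

lemma lt_m (hb : Good b) (k : ℕ) : k < mseq b k := by
  induction k with
  | zero => simp [mseq]
  | succ k ih => have := two_mul_m_le hb k; omega

lemma m_dvd (hb : Good b) {i j : ℕ} (h : i ≤ j) : mseq b i ∣ mseq b j := by
  induction j with
  | zero => simp at h; simp [h]
  | succ j ih =>
    rcases Nat.lt_or_ge i (j+1) with h'|h'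
    · exact Dvd.dvd.mul_right (ih (by omega)) _
    · have : i = j+1 := by omega
      simp [this]

lemma s_le_m (k : ℕ) : sseq b (k+1) ≤ mseq b k := Nat.sub_le _ _

lemma s_le_m' (hb : Good b) (k : ℕ) : sseq b k ≤ mseq b k := by
  cases k with
  | zero => simp [sseq]
  | succ k => exact (s_le_m k).trans (m_mono hb (by omega))

lemma s_add_s (hb : Good b) (k : ℕ) : sseq b (k+1) + sseq b k = mseq b k := by
  have := s_le_m' hb k
  simp [sseq]; omega

lemma s_pos (hb : Good b) (k : ℕ) : 1 ≤ sseq b (k+1) := by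
  induction k with
  | zero => simp [sseq, mseq]
  | succ k ih =>
    have h1 : sseq b (k+1) ≤ mseq b k := s_le_m k
    have h2 : 2 * mseq b k ≤ mseq b (k+1) := two_mul_m_le hb k
    have := m_pos hb k
    simp only [sseq]; omega

/-! ### digits -/

def term (b : ℕ → ℕ) (n i : ℕ) : ℕ := n % mseq b (i+1) - n % mseq b i

def gA (b : ℕ → ℕ) (p : ℕ → Bool) (n K : ℕ) : ℕ :=
  ∑ i ∈ Finset.range K, if p i then term b n i else 0

def gfun (b : ℕ → ℕ) (p : ℕ → Bool) (n : ℕ) : ℕ := gA b p n (n+1)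

lemma mod_mono_m (hb : Good b) (n i : ℕ) : n % mseq b i ≤ n % mseq b (i+1) := by
  rw [← Nat.mod_mod_of_dvd n (m_dvd hb (Nat.le_succ i))]
  exact Nat.mod_le _ _

lemma mod_add_term (hb : Good b) (n i : ℕ) :
    n % mseq b (i+1) = n % mseq b i + term b n i := by
  have := mod_mono_m hb n i
  simp only [term]; omega

lemma m_dvd_term (hb : Good b) (n i : ℕ) : mseq b i ∣ term b n i := by
  have h1 : n % mseq b i = (n % mseq b (i+1)) % mseq b i :=
    (Nat.mod_mod_of_dvd n (m_dvd hb (Nat.le_succ i))).symm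
  have h2 := Nat.div_add_mod (n % mseq b (i+1)) (mseq b i)
  exact ⟨(n % mseq b (i+1)) / mseq b i, by simp only [term]; omega⟩

lemma term_add_le (hb : Good b) (n i : ℕ) : term b n i + mseq b i ≤ mseq b (i+1) := by
  obtain ⟨t, ht⟩ := m_dvd_term hb n i
  have h1 : term b n i < mseq b (i+1) := by
    have := Nat.mod_lt n (y := mseq b (i+1)) (m_pos hb (i+1))
    simp only [term]; omega
  have hmi := m_pos hb i
  have hmeq : mseq b (i+1) = mseq b i * b (i+1) := rfl
  have h2 : t < b (i+1) := by
    rw [ht, hmeq] at h1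
    exact Nat.lt_of_mul_lt_mul_left h1
  calc term b n i + mseq b i = mseq b i * (t + 1) := by rw [ht]; ring
  _ ≤ mseq b i * b (i+1) := Nat.mul_le_mul_left _ (by omega)
  _ = mseq b (i+1) := rfl

lemma term_eq_zero_of_lt (hb : Good b) {n i : ℕ} (h : n < mseq b i) : term b n i = 0 := by
  have h1 : n % mseq b i = n := Nat.mod_eq_of_lt h
  have h2 : n % mseq b (i+1) = n := Nat.mod_eq_of_lt (lt_of_lt_of_le h (m_mono hb (Nat.le_succ i)))
  simp only [term]; omega

lemma gA_stable (hb : Good b) {p : ℕ → Bool} {n K K' : ℕ} (h : n < mseq b K) (hK : K ≤ K') :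
    gA b p n K' = gA b p n K := by
  unfold gA
  refine (Finset.sum_subset (Finset.range_subset_range.2 hK) ?_).symm
  intro i _ hi
  simp only [Finset.mem_range, not_lt] at hi
  have : n < mseq b i := lt_of_lt_of_le h (m_mono hb hi)
  rw [term_eq_zero_of_lt hb this]
  simp

lemma gA_add_compl (hb : Good b) (p : ℕ → Bool) (n K : ℕ) :
    gA b p n K + gA b (fun i => !p i) n K = n % mseq b K := by
  induction K with
  | zero => simp [gA, mseq, Nat.mod_one]
  | succ K ih =>
    have hterm := mod_add_term hb n K
    simp only [gA, Bool.not_eq_true'] at ih ⊢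
    rw [Finset.sum_range_succ, Finset.sum_range_succ]
    cases hp : p K <;> simp only [hp, Bool.false_eq_true, Bool.true_eq_false, if_false, if_true, ite_false, ite_true] <;> omega

lemma gA_le_mod (hb : Good b) (p : ℕ → Bool) (n K : ℕ) : gA b p n K ≤ n % mseq b K := by
  have := gA_add_compl hb p n K; omega

lemma n_lt_m_self (hb : Good b) (n : ℕ) : n < mseq b (n+1) :=
  lt_trans (by omega) (lt_m hb (n+1))

lemma gfun_eq (hb : Good b) {p : ℕ → Bool} {n K : ℕ} (h : n < mseq b K) :
    gfun b p n = gA b p n K := by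
  unfold gfun
  rcases Nat.le_total K (n+1) with h'|h'
  · exact gA_stable hb h h'
  · exact (gA_stable hb (n_lt_m_self hb n) h').symm

lemma gfun_add_compl (hb : Good b) (p : ℕ → Bool) (n : ℕ) :
    gfun b p n + gfun b (fun i => !p i) n = n := by
  unfold gfun
  rw [gA_add_compl hb p n (n+1), Nat.mod_eq_of_lt (n_lt_m_self hb n)]

lemma gfun_le (hb : Good b) (p : ℕ → Bool) (n : ℕ) : gfun b p n ≤ n := by
  have := gfun_add_compl hb p n; omega

lemma gfun_mod (hb : Good b) (p : ℕ → Bool) (n K : ℕ) :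
    gfun b p n % mseq b K = gA b p n K := by
  have hKbig : n < mseq b (max K (n+1)) :=
    lt_of_lt_of_le (n_lt_m_self hb n) (m_mono hb (le_max_right _ _))
  rw [gfun_eq hb hKbig]
  have hsplit : gA b p n (max K (n+1)) = gA b p n K +
      ∑ i ∈ Finset.Ico K (max K (n+1)), if p i then term b n i else 0 := by
    unfold gA
    rw [← Finset.sum_range_add_sum_Ico _ (le_max_left K (n+1))]
  rw [hsplit]
  have hdvd : mseq b K ∣ ∑ i ∈ Finset.Ico K (max K (n+1)), if p i then term b n i else 0 := by
    apply Finset.dvd_sum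
    intro i hi
    simp only [Finset.mem_Ico] at hi
    have : mseq b K ∣ term b n i := (m_dvd hb hi.1).trans (m_dvd_term hb n i)
    cases hp : p i <;> simp [hp, this]
  have hlt : gA b p n K < mseq b K :=
    lt_of_le_of_lt (gA_le_mod hb p n K) (Nat.mod_lt n (m_pos hb K))
  obtain ⟨c, hc⟩ := hdvd
  rw [hc, Nat.add_mul_mod_self_left, Nat.mod_eq_of_lt hlt]

lemma gA_of_mod (hb : Good b) (p : ℕ → Bool) (n K : ℕ) :
    gfun b p (n % mseq b K) = gA b p n K := by
  have h : n % mseq b K < mseq b K := Nat.mod_lt n (m_pos hb K)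
  rw [gfun_eq hb h]
  unfold gA
  apply Finset.sum_congr rfl
  intro i hi
  simp only [Finset.mem_range] at hi
  have e1 : n % mseq b K % mseq b i = n % mseq b i := Nat.mod_mod_of_dvd n (m_dvd hb (by omega))
  have e2 : n % mseq b K % mseq b (i+1) = n % mseq b (i+1) := Nat.mod_mod_of_dvd n (m_dvd hb (by omega))
  simp only [term, e1, e2]

lemma term_gfun (hb : Good b) (p : ℕ → Bool) (n i : ℕ) :
    term b (gfun b p n) i = if p i then term b n i else 0 := by
  have h1 : gfun b p n % mseq b (i+1) = gA b p n (i+1) := gfun_mod hb p n (i+1)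
  have h2 : gfun b p n % mseq b i = gA b p n i := gfun_mod hb p n i
  have h3 : gA b p n (i+1) = gA b p n i + (if p i then term b n i else 0) := by
    unfold gA; rw [Finset.sum_range_succ]
  simp only [term, h1, h2, h3]; omega

lemma term_zero_of_gfun_zero (hb : Good b) {p : ℕ → Bool} {n i : ℕ}
    (h : gfun b p n = 0) (hpi : p i = true) : term b n i = 0 := by
  have h1 : gA b p n (i+1) = 0 := by rw [← gfun_mod hb p n (i+1), h, Nat.zero_mod]
  have : (if p i then term b n i else 0) ≤ gA b p n (i+1) := by
    unfold gA; rw [Finset.sum_range_succ]; omega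
  rw [hpi] at this
  simp at this ⊢
  omega

lemma gfun_gfun_zero (hb : Good b) {p q : ℕ → Bool} (hpq : ∀ i, q i = true → p i = false)
    (n : ℕ) : gfun b q (gfun b p n) = 0 := by
  conv_lhs => rw [gfun]
  unfold gA
  apply Finset.sum_eq_zero
  intro i _
  cases hq : q i
  · simp
  · have hp := hpq i hq
    rw [term_gfun hb p n i, hp]
    simp

def pe : ℕ → Bool := fun i => i % 2 == 0
def po : ℕ → Bool := fun i => !(i % 2 == 0)

lemma pe_true_iff {i : ℕ} : pe i = true ↔ i % 2 = 0 := by simp [pe]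
lemma pe_false_iff {i : ℕ} : pe i = false ↔ i % 2 = 1 := by simp [pe]
lemma po_true_iff {i : ℕ} : po i = true ↔ i % 2 = 1 := by simp [po]
lemma po_false_iff {i : ℕ} : po i = false ↔ i % 2 = 0 := by simp [po]
lemma pe_true {i : ℕ} (h : i % 2 = 0) : pe i = true := pe_true_iff.mpr h
lemma po_true {i : ℕ} (h : i % 2 = 1) : po i = true := po_true_iff.mpr h

def alpha (b : ℕ → ℕ) : ℕ → ℕ := gfun b pe
def beta (b : ℕ → ℕ) : ℕ → ℕ := gfun b po

lemma gA_congr {p q : ℕ → Bool} (h : ∀ i, p i = q i) (n K : ℕ) :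
    gA b p n K = gA b q n K := by
  unfold gA
  exact Finset.sum_congr rfl (fun i _ => by rw [h i])

lemma compl_pe : ∀ i, (!pe i) = po i := fun i => rfl
lemma compl_po : ∀ i, (!po i) = pe i := fun i => by simp [pe, po]

lemma compl_gfun_pe (n : ℕ) : gfun b (fun i => !pe i) n = beta b n := by
  unfold beta gfun
  exact gA_congr compl_pe n (n+1)

lemma compl_gfun_po (n : ℕ) : gfun b (fun i => !po i) n = alpha b n := by
  unfold alpha gfun
  exact gA_congr compl_po n (n+1)

lemma alpha_add_beta (hb : Good b) (n : ℕ) : alpha b n + beta b n = n := by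
  have h := gfun_add_compl hb pe n
  rw [compl_gfun_pe] at h
  exact h

lemma alpha_le_self (hb : Good b) (n : ℕ) : alpha b n ≤ n := by
  have := alpha_add_beta hb n; omega

lemma beta_le_self (hb : Good b) (n : ℕ) : beta b n ≤ n := by
  have := alpha_add_beta hb n; omega

lemma beta_alpha_zero (hb : Good b) (n : ℕ) : beta b (alpha b n) = 0 := by
  refine gfun_gfun_zero hb (p := pe) (q := po) (fun i hi => ?_) n
  have := po_true_iff.mp hi
  exact pe_false_iff.mpr this

lemma alpha_beta_zero (hb : Good b) (n : ℕ) : alpha b (beta b n) = 0 := by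
  refine gfun_gfun_zero hb (p := po) (q := pe) (fun i hi => ?_) n
  have := pe_true_iff.mp hi
  exact po_false_iff.mpr this

lemma alpha_eq_self (hb : Good b) {n : ℕ} (h : beta b n = 0) : alpha b n = n := by
  have := alpha_add_beta hb n; omega

lemma beta_eq_self (hb : Good b) {n : ℕ} (h : alpha b n = 0) : beta b n = n := by
  have := alpha_add_beta hb n; omega


lemma mods_add_lt (hb : Good b) {a c : ℕ} (ha : beta b a = 0) (hc : alpha b c = 0) (K : ℕ) :
    a % mseq b K + c % mseq b K < mseq b K := by
  induction K with
  | zero => simp [mseq, Nat.mod_one]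
  | succ K ih =>
    have h1 := mod_add_term hb a K
    have h2 := mod_add_term hb c K
    have hle1 := term_add_le hb a K
    have hle2 := term_add_le hb c K
    rcases Nat.even_or_odd K with hK|hK
    · have hz : term b c K = 0 :=
        term_zero_of_gfun_zero hb hc (pe_true (Nat.even_iff.mp hK))
      omega
    · have hz : term b a K = 0 :=
        term_zero_of_gfun_zero hb ha (po_true (Nat.odd_iff.mp hK))
      omega

lemma add_mod_eq (hb : Good b) {a c : ℕ} (ha : beta b a = 0) (hc : alpha b c = 0) (K : ℕ) :
    (a + c) % mseq b K = a % mseq b K + c % mseq b K := by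
  rw [Nat.add_mod]
  exact Nat.mod_eq_of_lt (mods_add_lt hb ha hc K)

lemma term_add_eq (hb : Good b) {a c : ℕ} (ha : beta b a = 0) (hc : alpha b c = 0) (i : ℕ) :
    term b (a + c) i = term b a i + term b c i := by
  have h1 := add_mod_eq hb ha hc (i+1)
  have h2 := add_mod_eq hb ha hc i
  have m1 := mod_mono_m hb a i
  have m2 := mod_mono_m hb c i
  simp only [term]
  omega

lemma gA_add_eq (hb : Good b) {a c : ℕ} (ha : beta b a = 0) (hc : alpha b c = 0)
    (p : ℕ → Bool) (K : ℕ) : gA b p (a + c) K = gA b p a K + gA b p c K := by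
  unfold gA
  rw [← Finset.sum_add_distrib]
  apply Finset.sum_congr rfl
  intro i _
  rw [term_add_eq hb ha hc i]
  cases hp : p i <;> simp

lemma alpha_add (hb : Good b) {a c : ℕ} (ha : beta b a = 0) (hc : alpha b c = 0) :
    alpha b (a + c) = a := by
  have hK : a + c < mseq b (a+c+1) := n_lt_m_self hb (a+c)
  have hKa : a < mseq b (a+c+1) := by omega
  have hKc : c < mseq b (a+c+1) := by omega
  have e1 : alpha b (a + c) = gA b pe (a+c) (a+c+1) := gfun_eq hb hK
  have e2 : alpha b a = gA b pe a (a+c+1) := gfun_eq hb hKa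
  have e3 : alpha b c = gA b pe c (a+c+1) := gfun_eq hb hKc
  rw [e1, gA_add_eq hb ha hc, ← e2, ← e3, hc, alpha_eq_self hb ha]
  omega

lemma beta_add (hb : Good b) {a c : ℕ} (ha : beta b a = 0) (hc : alpha b c = 0) :
    beta b (a + c) = c := by
  have h1 := alpha_add_beta hb (a+c)
  have h2 := alpha_add hb ha hc
  omega

lemma gfun_split (hb : Good b) (p : ℕ → Bool) {n K : ℕ} (h1 : n < mseq b (K+1)) :
    gfun b p n = (if p K then n - n % mseq b K else 0) + gfun b p (n % mseq b K) := by
  rw [gfun_eq hb h1, gA_of_mod hb]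
  unfold gA
  rw [Finset.sum_range_succ]
  have : term b n K = n - n % mseq b K := by
    have : n % mseq b (K+1) = n := Nat.mod_eq_of_lt h1
    simp only [term, this]
  rw [this]
  omega

def Oe (b : ℕ → ℕ) (p : ℕ → Bool) (K : ℕ) : ℕ :=
  ∑ i ∈ Finset.range K, if p i then (mseq b (i+1) - mseq b i) else 0

lemma gA_le_Oe (hb : Good b) (p : ℕ → Bool) (n K : ℕ) : gA b p n K ≤ Oe b p K := by
  unfold gA Oe
  apply Finset.sum_le_sum
  intro i _
  have h1 := term_add_le hb n i
  have h2 := (m_lt_succ hb i).le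
  cases hp : p i <;> simp <;> omega

lemma gfun_le_Oe (hb : Good b) (p : ℕ → Bool) {n K : ℕ} (h : n < mseq b K) :
    gfun b p n ≤ Oe b p K := by
  rw [gfun_eq hb h]; exact gA_le_Oe hb p n K

lemma Oe_val (hb : Good b) (k : ℕ) :
    (k % 2 = 0 → Oe b pe k = sseq b k ∧ Oe b po k + sseq b k + 1 = mseq b k)
    ∧ (k % 2 = 1 → Oe b pe k + sseq b k = mseq b k ∧ Oe b po k + 1 = sseq b k) := by
  induction k with
  | zero => simp [Oe, sseq, mseq]
  | succ k ih =>
    have hpe : Oe b pe (k+1) = Oe b pe k + (if pe k then (mseq b (k+1) - mseq b k) else 0) := by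
      unfold Oe; rw [Finset.sum_range_succ]
    have hpo : Oe b po (k+1) = Oe b po k + (if po k then (mseq b (k+1) - mseq b k) else 0) := by
      unfold Oe; rw [Finset.sum_range_succ]
    have hs := s_add_s hb k
    have hm := m_lt_succ hb k
    have hsm := s_le_m' hb k
    rcases Nat.even_or_odd k with hK|hK
    · have hK' := Nat.even_iff.mp hK
      have h1 := (ih.1 hK').1
      have h2 := (ih.1 hK').2
      rw [pe_true hK'] at hpe
      have : po k = false := by simp [po]; omega
      rw [this] at hpo
      simp only [if_true, if_false, Bool.false_eq_true, ite_false, ite_true] at hpe hpo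
      constructor
      · intro h; omega
      · intro h
        constructor <;> omega
    · have hK' := Nat.odd_iff.mp hK
      have h1 := (ih.2 hK').1
      have h2 := (ih.2 hK').2
      rw [po_true hK'] at hpo
      have : pe k = false := by simp [pe]; omega
      rw [this] at hpe
      simp only [if_true, if_false, Bool.false_eq_true, ite_false, ite_true] at hpe hpo
      constructor
      · intro h; omega
      · intro h; omega
/-! ### counting -/

def cntA (b : ℕ → ℕ) (x : ℕ) : ℕ := ((Finset.Iic x).filter (fun n => beta b n = 0)).card
def cntB (b : ℕ → ℕ) (x : ℕ) : ℕ := ((Finset.Iic x).filter (fun n => alpha b n = 0)).card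
def FS (b : ℕ → ℕ) (x y : ℕ) : Finset ℕ :=
  (Finset.Iic (x+y)).filter (fun n => alpha b n ≤ x ∧ beta b n ≤ y)
def NS (b : ℕ → ℕ) (x : ℕ) : Finset ℕ :=
  (Finset.Ioc x (2*x)).filter (fun n => alpha b n ≤ x ∧ beta b n ≤ x)

lemma FS_card (hb : Good b) (x y : ℕ) : (FS b x y).card = cntA b x * cntB b y := by
  unfold cntA cntB
  rw [← Finset.card_product]
  apply Finset.card_bij' (fun n _ => (alpha b n, beta b n)) (fun p _ => p.1 + p.2)
  · intro n hn
    simp only [FS, Finset.mem_filter, Finset.mem_Iic] at hn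
    simp only [Finset.mem_product, Finset.mem_filter, Finset.mem_Iic]
    exact ⟨⟨hn.2.1, beta_alpha_zero hb n⟩, ⟨hn.2.2, alpha_beta_zero hb n⟩⟩
  · intro p hp
    simp only [Finset.mem_product, Finset.mem_filter, Finset.mem_Iic] at hp
    simp only [FS, Finset.mem_filter, Finset.mem_Iic]
    have h1 : alpha b (p.1 + p.2) = p.1 := alpha_add hb hp.1.2 hp.2.2
    have h2 : beta b (p.1 + p.2) = p.2 := beta_add hb hp.1.2 hp.2.2
    exact ⟨Nat.add_le_add hp.1.1 hp.2.1, by rw [h1]; exact hp.1.1, by rw [h2]; exact hp.2.1⟩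
  · intro n hn
    exact alpha_add_beta hb n
  · intro p hp
    simp only [Finset.mem_product, Finset.mem_filter, Finset.mem_Iic] at hp
    have h1 : alpha b (p.1 + p.2) = p.1 := alpha_add hb hp.1.2 hp.2.2
    have h2 : beta b (p.1 + p.2) = p.2 := beta_add hb hp.1.2 hp.2.2
    simp [h1, h2]

lemma FS_split (hb : Good b) (x : ℕ) : (FS b x x).card = (x + 1) + (NS b x).card := by
  unfold FS NS
  have hu : Finset.Iic (x+x) = Finset.Iic x ∪ Finset.Ioc x (x+x) := by
    ext n
    simp only [Finset.mem_Iic, Finset.mem_union, Finset.mem_Ioc]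
    omega
  have h2x : (2:ℕ)*x = x + x := by ring
  rw [hu, Finset.filter_union, Finset.card_union_of_disjoint, h2x]
  · congr 1
    rw [Finset.filter_true_of_mem, Nat.card_Iic]
    intro n hn
    simp only [Finset.mem_Iic] at hn
    exact ⟨(alpha_le_self hb n).trans hn, (beta_le_self hb n).trans hn⟩
  · apply Finset.disjoint_filter_filter
    rw [Finset.disjoint_left]
    intro n h1 h2
    simp only [Finset.mem_Iic] at h1
    simp only [Finset.mem_Ioc] at h2
    omega

lemma exists_top (hb : Good b) {n : ℕ} (h1 : 1 ≤ n) :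
    ∃ t, mseq b t ≤ n ∧ n < mseq b (t+1) := by
  have hP0 : mseq b 0 ≤ n := by simpa [mseq] using h1
  set t := Nat.findGreatest (fun t => mseq b t ≤ n) n with ht
  have hspec : mseq b t ≤ n := Nat.findGreatest_spec (P := fun t => mseq b t ≤ n) (Nat.zero_le n) hP0
  refine ⟨t, hspec, ?_⟩
  by_contra h
  push_neg at h
  have h2 : t + 1 ≤ n := le_trans (le_of_lt (lt_m hb (t+1))) h
  exact Nat.findGreatest_is_greatest (Nat.lt_succ_self t) h2 h

lemma sub_mod_ge (hb : Good b) {n t : ℕ} (h : mseq b t ≤ n) :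
    n % mseq b t + mseq b t ≤ n := by
  have hq : 1 ≤ n / mseq b t := (Nat.one_le_div_iff (m_pos hb t)).mpr h
  have hdm := Nat.div_add_mod n (mseq b t)
  have h3 : mseq b t * 1 ≤ mseq b t * (n / mseq b t) := Nat.mul_le_mul_left _ hq
  omega

lemma top_le_alpha (hb : Good b) {n t : ℕ} (h1 : mseq b t ≤ n) (h2 : n < mseq b (t+1))
    (hp : t % 2 = 0) : mseq b t ≤ alpha b n := by
  have := gfun_split hb pe h2
  rw [pe_true hp] at this
  simp only [if_true] at this
  have hmod := sub_mod_ge hb h1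
  unfold alpha
  omega

lemma top_le_beta (hb : Good b) {n t : ℕ} (h1 : mseq b t ≤ n) (h2 : n < mseq b (t+1))
    (hp : t % 2 = 1) : mseq b t ≤ beta b n := by
  have := gfun_split hb po h2
  rw [po_true hp] at this
  simp only [if_true] at this
  have hmod := sub_mod_ge hb h1
  unfold beta
  omega

/-- every element of `NS b x` is at most `x + (m k - s k)`, for `m k ≤ x < m (k+1)`. -/
lemma NS_mem_le (hb : Good b) {k x n : ℕ} (hk : mseq b k ≤ x) (hk2 : x < mseq b (k+1))
    (hn : n ∈ NS b x) : x < n ∧ n + sseq b k ≤ x + mseq b k := by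
  simp only [NS, Finset.mem_filter, Finset.mem_Ioc] at hn
  obtain ⟨⟨hxn, hn2x⟩, hα, hβ⟩ := hn
  refine ⟨hxn, ?_⟩
  have hn1 : 1 ≤ n := by have := m_pos hb k; omega
  obtain ⟨t, ht1, ht2⟩ := exists_top hb hn1
  -- t ≤ k
  have htk : t ≤ k := by
    by_contra h
    push_neg at h
    -- t ≥ k+1 : contradiction by parity
    have hm1 : mseq b (k+1) ≤ mseq b t := m_mono hb (by omega)
    rcases Nat.even_or_odd t with hpar|hpar
    · have := top_le_alpha hb ht1 ht2 (Nat.even_iff.mp hpar)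
      omega
    · have := top_le_beta hb ht1 ht2 (Nat.odd_iff.mp hpar)
      omega
  have hnk1 : n < mseq b (k+1) := lt_of_lt_of_le ht2 (m_mono hb (by omega))
  have hab := alpha_add_beta hb n
  have hss := s_add_s hb k
  have hsle := s_le_m' hb k
  rcases Nat.even_or_odd k with hpar|hpar
  · -- k even : beta b n ≤ Oe b po (k+1) = s(k+1) - 1 = m k - s k - 1
    have hpar' := Nat.even_iff.mp hpar
    have hOe : beta b n ≤ Oe b po (k+1) := gfun_le_Oe hb po hnk1
    have hval := ((Oe_val hb (k+1)).2 (by omega)).2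
    omega
  · have hpar' := Nat.odd_iff.mp hpar
    have hOe : alpha b n ≤ Oe b pe (k+1) := gfun_le_Oe hb pe hnk1
    have hval := ((Oe_val hb (k+1)).1 (by omega)).1
    omega

lemma NS_card_le (hb : Good b) {k x : ℕ} (hk : mseq b k ≤ x) (hk2 : x < mseq b (k+1)) :
    (NS b x).card + sseq b k ≤ mseq b k := by
  have hsub : NS b x ⊆ Finset.Ioc x (x + (mseq b k - sseq b k)) := by
    intro n hn
    have := NS_mem_le hb hk hk2 hn
    have := s_le_m' hb k
    simp only [Finset.mem_Ioc]
    omega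
  have := Finset.card_le_card hsub
  rw [Nat.card_Ioc] at this
  have := s_le_m' hb k
  omega
lemma mod_eq_sub {M n : ℕ} (h1 : M ≤ n) (h2 : n < 2*M) : n % M = n - M := by
  have h3 : n % M = (M + (n - M)) % M := by congr 1; omega
  rw [h3, Nat.add_mod_left, Nat.mod_eq_of_lt (by omega)]

lemma cnt_filter_mod {M c : ℕ} (q : ℕ) (hc : c < M) :
    ((Finset.range (q * M)).filter (fun y => y % M ≤ c)).card = q * (c + 1) := by
  induction q with
  | zero => simp
  | succ q ih =>
    have hM : (q+1)*M = q*M + M := by ring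
    have hsplit : Finset.range ((q+1) * M) =
        Finset.range (q*M) ∪ Finset.Ico (q*M) ((q+1)*M) := by
      ext y
      simp only [Finset.mem_range, Finset.mem_union, Finset.mem_Ico]
      omega
    rw [hsplit, Finset.filter_union, Finset.card_union_of_disjoint, ih]
    · have hIco : (Finset.Ico (q*M) ((q+1)*M)).filter (fun y => y % M ≤ c) =
          Finset.Ico (q*M) (q*M + (c+1)) := by
        ext y
        simp only [Finset.mem_filter, Finset.mem_Ico]
        constructor
        · rintro ⟨⟨hy1, hy2⟩, hy3⟩
          have hmod : y % M = y - q*M := by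
            have hcomm : M * q = q * M := Nat.mul_comm M q
            have h3 : y % M = (M*q + (y - q*M)) % M := by congr 1; omega
            rw [h3, Nat.mul_add_mod, Nat.mod_eq_of_lt (by omega)]
          omega
        · rintro ⟨hy1, hy2⟩
          have hmod : y % M = y - q*M := by
            have hcomm : M * q = q * M := Nat.mul_comm M q
            have h3 : y % M = (M*q + (y - q*M)) % M := by congr 1; omega
            rw [h3, Nat.mul_add_mod, Nat.mod_eq_of_lt (by omega)]
          omega
      rw [hIco, Nat.card_Ico]
      have : q*M + (c+1) - q*M = c+1 := by omega
      rw [this, Nat.succ_mul]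
    · rw [Finset.disjoint_left]
      intro y hy1 hy2
      simp only [Finset.mem_filter, Finset.mem_range, Finset.mem_Ico] at hy1 hy2
      omega

lemma NS_card_le2 (hb : Good b) {j x : ℕ} (hx : mseq b (j+1) ≤ x)
    (hx2 : x < mseq b (j+1) + sseq b (j+1)) :
    (NS b x).card + 2 * sseq b (j+1) ≤ x + 1 := by
  have hsm : sseq b (j+1) ≤ mseq b j := s_le_m j
  have hss := s_add_s hb j
  have hbk : 2 ≤ b (j+1) := hb (j+1) (by omega)
  have hmk : mseq b (j+1) = mseq b j * b (j+1) := rfl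
  have hmj := m_pos hb j
  have hmkpos := m_pos hb (j+1)
  have h2m : 2 * mseq b (j+1) ≤ mseq b (j+2) := two_mul_m_le hb (j+1)
  have hmlt := m_lt_succ hb j
  set u := x - mseq b (j+1) with hu
  have hux : x = mseq b (j+1) + u := by omega
  have hus : u < sseq b (j+1) := by omega
  have hx3 : x < mseq b (j+2) := by omega
  -- membership
  have hmem : ∀ n ∈ NS b x, (mseq b (j+1) ≤ n ∧ n < 2 * mseq b (j+1)) ∧
      (u < n % mseq b (j+1) ∧ n % mseq b j ≤ u + sseq b j) := by
    intro n hn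
    obtain ⟨hxn, hle⟩ := NS_mem_le hb hx hx3 hn
    simp only [NS, Finset.mem_filter, Finset.mem_Ioc] at hn
    obtain ⟨-, hα, hβ⟩ := hn
    have hssk := s_add_s hb (j+1)
    have hn2m : n < 2 * mseq b (j+1) := by omega
    have hnmk : mseq b (j+1) ≤ n := by omega
    have hmodk : n % mseq b (j+1) = n - mseq b (j+1) := mod_eq_sub hnmk hn2m
    have hun : u < n % mseq b (j+1) := by omega
    refine ⟨⟨hnmk, hn2m⟩, hun, ?_⟩
    have hnk1 : n < mseq b (j+2) := by omega
    have hαβ := alpha_add_beta hb n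
    have hsummod : n % mseq b j = alpha b n % mseq b j + beta b n % mseq b j := by
      conv_lhs => rw [← hαβ]
      exact add_mod_eq hb (beta_alpha_zero hb n) (alpha_beta_zero hb n) j
    rcases Nat.even_or_odd (j+1) with hpar|hpar
    · -- j+1 even, j odd : alpha has the top digit
      have hpar' := Nat.even_iff.mp hpar
      have hparj : j % 2 = 1 := by omega
      have htop : mseq b (j+1) ≤ alpha b n := top_le_alpha hb hnmk hnk1 hpar'
      have hα2m : alpha b n < 2 * mseq b (j+1) := by omega
      have hαmk : alpha b n % mseq b (j+1) = alpha b n - mseq b (j+1) :=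
        mod_eq_sub htop hα2m
      have hαj : alpha b n % mseq b j ≤ u := by
        have e1 : alpha b n % mseq b j = (alpha b n % mseq b (j+1)) % mseq b j :=
          (Nat.mod_mod_of_dvd _ (m_dvd hb (by omega))).symm
        have e2 : (alpha b n % mseq b (j+1)) % mseq b j ≤ alpha b n % mseq b (j+1) :=
          Nat.mod_le _ _
        omega
      have hβj : beta b n % mseq b j ≤ sseq b j := by
        have e1 : beta b n % mseq b j = gA b po n j := gfun_mod hb po n j
        have e2 : gA b po n j ≤ Oe b po j := gA_le_Oe hb po n j
        have e3 := ((Oe_val hb j).2 hparj).2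
        omega
      omega
    · -- j+1 odd, j even : beta has the top digit
      have hpar' := Nat.odd_iff.mp hpar
      have hparj : j % 2 = 0 := by omega
      have htop : mseq b (j+1) ≤ beta b n := top_le_beta hb hnmk hnk1 hpar'
      have hβ2m : beta b n < 2 * mseq b (j+1) := by omega
      have hβmk : beta b n % mseq b (j+1) = beta b n - mseq b (j+1) :=
        mod_eq_sub htop hβ2m
      have hβj : beta b n % mseq b j ≤ u := by
        have e1 : beta b n % mseq b j = (beta b n % mseq b (j+1)) % mseq b j :=
          (Nat.mod_mod_of_dvd _ (m_dvd hb (by omega))).symm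
        have e2 : (beta b n % mseq b (j+1)) % mseq b j ≤ beta b n % mseq b (j+1) :=
          Nat.mod_le _ _
        omega
      have hαj : alpha b n % mseq b j ≤ sseq b j := by
        have e1 : alpha b n % mseq b j = gA b pe n j := gfun_mod hb pe n j
        have e2 : gA b pe n j ≤ Oe b pe j := gA_le_Oe hb pe n j
        have e3 := ((Oe_val hb j).1 hparj).1
        omega
      omega
  -- counting sets
  set T1 := (Finset.Ico (mseq b (j+1)) (2*mseq b (j+1))).filter
      (fun n => n % mseq b j ≤ u + sseq b j) with hT1
  set T0 := Finset.Ico (mseq b (j+1)) (mseq b (j+1) + (u+1)) with hT0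
  have hT0T1 : T0 ⊆ T1 := by
    intro n hn
    simp only [hT0, Finset.mem_Ico] at hn
    simp only [hT1, Finset.mem_filter, Finset.mem_Ico]
    have hmodk : n % mseq b (j+1) = n - mseq b (j+1) := mod_eq_sub (by omega) (by omega)
    have e1 : n % mseq b j = (n % mseq b (j+1)) % mseq b j :=
      (Nat.mod_mod_of_dvd _ (m_dvd hb (by omega))).symm
    have e2 : (n % mseq b (j+1)) % mseq b j ≤ n % mseq b (j+1) := Nat.mod_le _ _
    exact ⟨⟨by omega, by omega⟩, by omega⟩
  have hNS_T : NS b x ⊆ T1 \ T0 := by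
    intro n hn
    have h1 := hmem n hn
    have hmodk : n % mseq b (j+1) = n - mseq b (j+1) := mod_eq_sub (by omega) (by omega)
    simp only [Finset.mem_sdiff, hT1, hT0, Finset.mem_filter, Finset.mem_Ico]
    refine ⟨⟨⟨by omega, by omega⟩, by omega⟩, by omega⟩
  -- card T1
  have hcT1 : T1.card = b (j+1) * (u + sseq b j + 1) := by
    have hbij : T1.card = ((Finset.range (mseq b (j+1))).filter
        (fun y => y % mseq b j ≤ u + sseq b j)).card := by
      apply Finset.card_bij' (fun n _ => n - mseq b (j+1)) (fun y _ => y + mseq b (j+1))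
      · intro n hn
        simp only [hT1, Finset.mem_filter, Finset.mem_Ico] at hn
        simp only [Finset.mem_filter, Finset.mem_range]
        obtain ⟨mdvd, hd⟩ : mseq b j ∣ mseq b (j+1) := m_dvd hb (by omega)
        have e1 : (n - mseq b (j+1)) % mseq b j = n % mseq b j := by
          have h4 : n = mseq b j * mdvd + (n - mseq b (j+1)) := by omega
          conv_rhs => rw [h4]
          rw [Nat.mul_add_mod]
        exact ⟨by omega, by omega⟩
      · intro y hy
        simp only [Finset.mem_filter, Finset.mem_range] at hy
        simp only [hT1, Finset.mem_filter, Finset.mem_Ico]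
        obtain ⟨mdvd, hd⟩ : mseq b j ∣ mseq b (j+1) := m_dvd hb (by omega)
        have e1 : (y + mseq b (j+1)) % mseq b j = y % mseq b j := by
          have h4 : y + mseq b (j+1) = mseq b j * mdvd + y := by omega
          rw [h4, Nat.mul_add_mod]
        exact ⟨⟨by omega, by omega⟩, by omega⟩
      · intro n hn
        simp only [hT1, Finset.mem_filter, Finset.mem_Ico] at hn
        omega
      · intro y hy
        omega
    rw [hbij]
    have : mseq b (j+1) = b (j+1) * mseq b j := by rw [hmk]; ring
    rw [this, cnt_filter_mod (b (j+1)) (by omega)]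
  have hcT0 : T0.card = u + 1 := by
    simp only [hT0, Nat.card_Ico]
    omega
  have hcard : (NS b x).card + (u+1) ≤ b (j+1) * (u + sseq b j + 1) := by
    have h1 := Finset.card_le_card hNS_T
    have h2 := Finset.card_sdiff_of_subset hT0T1
    have h3 := Finset.card_le_card hT0T1
    omega
  -- final arithmetic
  obtain ⟨c, hc⟩ : ∃ c, b (j+1) = 2 + c := ⟨b (j+1) - 2, by omega⟩
  have key : c * (u+1) ≤ c * sseq b (j+1) := Nat.mul_le_mul_left c (by omega)
  have expand1 : b (j+1) * (u + sseq b j + 1) =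
      2*(u+1) + 2*sseq b j + c * (u+1) + c * sseq b j := by rw [hc]; ring
  have expand2 : mseq b (j+1) = 2*sseq b (j+1) + 2*sseq b j + c * sseq b (j+1) + c * sseq b j := by
    rw [hmk, hc, ← hss]; ring
  omega

lemma FS_lower (hb : Good b) (k : ℕ) :
    2 * mseq b k ≤ (FS b (mseq b k + sseq b k) (mseq b k + sseq b k)).card := by
  set x := mseq b k + sseq b k with hx
  have hsub : Finset.range (2 * mseq b k) ⊆ FS b x x := by
    intro n hn
    simp only [Finset.mem_range] at hn
    simp only [FS, Finset.mem_filter, Finset.mem_Iic]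
    have hmpos := m_pos hb k
    have hα := alpha_le_self hb n
    have hβ := beta_le_self hb n
    refine ⟨by omega, ?_⟩
    rcases lt_or_ge n (mseq b k) with h|h
    · constructor <;> omega
    · have hn1 : n < mseq b (k+1) := lt_of_lt_of_le hn (two_mul_m_le hb k)
      have hsplitA := gfun_split hb pe hn1 (n := n)
      have hsplitB := gfun_split hb po hn1 (n := n)
      have hmod : n % mseq b k = n - mseq b k := mod_eq_sub h hn
      have hmlt : n % mseq b k < mseq b k := Nat.mod_lt n hmpos
      have hOA : gfun b pe (n % mseq b k) ≤ Oe b pe k := gfun_le_Oe hb pe hmlt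
      have hOB : gfun b po (n % mseq b k) ≤ Oe b po k := gfun_le_Oe hb po hmlt
      have hss := s_add_s hb k
      have hsm := s_le_m' hb k
      rcases Nat.even_or_odd k with hpar|hpar
      · have hpar' := Nat.even_iff.mp hpar
        rw [pe_true hpar'] at hsplitA
        rw [po_false_iff.mpr hpar'] at hsplitB
        simp only [if_true, Bool.false_eq_true, if_false, ite_true, ite_false] at hsplitA hsplitB
        have h1 := ((Oe_val hb k).1 hpar').1
        have h2 := ((Oe_val hb k).1 hpar').2
        unfold alpha beta
        constructor <;> omega
      · have hpar' := Nat.odd_iff.mp hpar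
        rw [po_true hpar'] at hsplitB
        rw [pe_false_iff.mpr (by omega)] at hsplitA
        simp only [if_true, Bool.false_eq_true, if_false, ite_true, ite_false] at hsplitA hsplitB
        have h1 := ((Oe_val hb k).2 hpar').1
        have h2 := ((Oe_val hb k).2 hpar').2
        unfold alpha beta
        constructor <;> omega
  calc 2 * mseq b k = (Finset.range (2 * mseq b k)).card := (Finset.card_range _).symm
  _ ≤ (FS b x x).card := Finset.card_le_card hsub

lemma FS_eq_at (hb : Good b) (k : ℕ) :
    (FS b (mseq b (k+1) - 1) (mseq b (k+1) - 1)).card = mseq b (k+1) := by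
  have hmpos := m_pos hb (k+1)
  set x := mseq b (k+1) - 1 with hx
  have hFS : FS b x x = Finset.Iic x := by
    apply Finset.Subset.antisymm
    · intro n hn
      simp only [FS, Finset.mem_filter, Finset.mem_Iic] at hn
      obtain ⟨h2x, hα, hβ⟩ := hn
      simp only [Finset.mem_Iic]
      by_contra h
      push_neg at h
      have hn1 : 1 ≤ n := by omega
      obtain ⟨t, ht1, ht2⟩ := exists_top hb hn1
      have htk : k+1 ≤ t := by
        by_contra h'
        push_neg at h'
        have : mseq b (t+1) ≤ mseq b (k+1) := m_mono hb (by omega)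
        omega
      have hmt : mseq b (k+1) ≤ mseq b t := m_mono hb htk
      rcases Nat.even_or_odd t with hpar|hpar
      · have := top_le_alpha hb ht1 ht2 (Nat.even_iff.mp hpar)
        omega
      · have := top_le_beta hb ht1 ht2 (Nat.odd_iff.mp hpar)
        omega
    · intro n hn
      simp only [Finset.mem_Iic] at hn
      simp only [FS, Finset.mem_filter, Finset.mem_Iic]
      have hα := alpha_le_self hb n
      have hβ := beta_le_self hb n
      exact ⟨by omega, by omega, by omega⟩
  rw [hFS, Nat.card_Iic]
  omega
/-! ### the sets A and B -/

def Aset (b : ℕ → ℕ) : Set ℕ := {n | beta b n = 0}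
def Bset (b : ℕ → ℕ) : Set ℕ := {n | alpha b n = 0}

lemma countBelow_A (hb : Good b) (x : ℕ) : countBelow (Aset b) x = cntA b x := by
  unfold countBelow cntA
  classical
  have : Aset b ∩ Set.Iic x = ↑((Finset.Iic x).filter (fun n => beta b n = 0)) := by
    ext n
    simp [Aset, Set.mem_inter_iff, Finset.mem_filter, Finset.mem_Iic, Set.mem_Iic, and_comm]
  rw [this, Set.ncard_coe_finset]

lemma countBelow_B (hb : Good b) (x : ℕ) : countBelow (Bset b) x = cntB b x := by
  unfold countBelow cntB
  classical
  have : Bset b ∩ Set.Iic x = ↑((Finset.Iic x).filter (fun n => alpha b n = 0)) := by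
    ext n
    simp [Bset, Set.mem_inter_iff, Finset.mem_filter, Finset.mem_Iic, Set.mem_Iic, and_comm]
  rw [this, Set.ncard_coe_finset]

lemma countBelow_mul (hb : Good b) (x : ℕ) :
    countBelow (Aset b) x * countBelow (Bset b) x = (x + 1) + (NS b x).card := by
  rw [countBelow_A hb, countBelow_B hb, ← FS_card hb, FS_split hb]

lemma gfun_m_zero (hb : Good b) {p : ℕ → Bool} {k : ℕ} (hp : p k = false) :
    gfun b p (mseq b k) = 0 := by
  unfold gfun gA
  apply Finset.sum_eq_zero
  intro i _
  rcases lt_trichotomy i k with h|h|h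
  · obtain ⟨c1, hc1⟩ := m_dvd hb (show i ≤ k by omega)
    obtain ⟨c2, hc2⟩ := m_dvd hb (show i+1 ≤ k by omega)
    have h1 : mseq b k % mseq b i = 0 := by rw [hc1, Nat.mul_mod_right]
    have h2 : mseq b k % mseq b (i+1) = 0 := by rw [hc2, Nat.mul_mod_right]
    simp [term, h1, h2]
  · rw [h, hp]; simp
  · rw [term_eq_zero_of_lt hb (m_strictMono hb h)]; simp

lemma Aset_infinite (hb : Good b) : (Aset b).Infinite := by
  apply Set.infinite_of_injective_forall_mem (f := fun t => mseq b (2*t))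
  case hi =>
    intro a c h
    have := (m_strictMono hb).injective h
    omega
  case hf =>
    intro t
    show beta b (mseq b (2*t)) = 0
    exact gfun_m_zero hb (po_false_iff.mpr (by omega))

lemma Bset_infinite (hb : Good b) : (Bset b).Infinite := by
  apply Set.infinite_of_injective_forall_mem (f := fun t => mseq b (2*t+1))
  case hi =>
    intro a c h
    have := (m_strictMono hb).injective h
    omega
  case hf =>
    intro t
    show alpha b (mseq b (2*t+1)) = 0
    exact gfun_m_zero hb (pe_false_iff.mpr (by omega))

lemma addComp_AB (hb : Good b) : AddComp (Aset b) (Bset b) := by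
  refine ⟨Aset_infinite hb, Bset_infinite hb, Filter.Eventually.of_forall (fun n => ?_)⟩
  exact ⟨alpha b n, beta_alpha_zero hb n, beta b n, alpha_beta_zero hb n, alpha_add_beta hb n⟩

/-! ### Dk identity -/

lemma Dk_succ (k : ℕ) : Dk b (k+1) = (1 - Dk b k) / (b (k+1) : ℝ) := by
  unfold Dk
  rw [Finset.sum_range_succ']
  have h0 : ((-1:ℝ)) ^ 0 * (∏ j ∈ Finset.range (0 + 1), (b (k + 1 - j) : ℝ))⁻¹
      = ((b (k+1) : ℝ))⁻¹ := by
    simp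
  have hterm : ∀ i, (-1:ℝ) ^ (i+1) * (∏ j ∈ Finset.range (i + 1 + 1), (b (k + 1 - j) : ℝ))⁻¹
      = -(((b (k+1):ℝ))⁻¹ * ((-1:ℝ) ^ i * (∏ j ∈ Finset.range (i + 1), (b (k - j) : ℝ))⁻¹)) := by
    intro i
    have hp : (∏ j ∈ Finset.range (i + 1 + 1), (b (k + 1 - j) : ℝ))
        = (∏ j ∈ Finset.range (i + 1), (b (k - j) : ℝ)) * (b (k+1) : ℝ) := by
      rw [Finset.prod_range_succ']
      have e1 : ∀ j : ℕ, k + 1 - (j+1) = k - j := fun j => by omega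
      simp only [e1, Nat.sub_zero]
    rw [hp, pow_succ]
    rw [mul_inv]
    ring
  calc (∑ i ∈ Finset.range k, (-1:ℝ) ^ (i+1) * (∏ j ∈ Finset.range (i + 1 + 1), (b (k + 1 - j) : ℝ))⁻¹)
        + (-1:ℝ) ^ 0 * (∏ j ∈ Finset.range (0 + 1), (b (k + 1 - j) : ℝ))⁻¹
      = (∑ i ∈ Finset.range k, -(((b (k+1):ℝ))⁻¹ * ((-1:ℝ) ^ i * (∏ j ∈ Finset.range (i + 1), (b (k - j) : ℝ))⁻¹)))
        + ((b (k+1) : ℝ))⁻¹ := by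
        rw [h0]
        congr 1
        exact Finset.sum_congr rfl (fun i _ => hterm i)
  _ = ((b (k+1) : ℝ))⁻¹ - ((b (k+1):ℝ))⁻¹ * (∑ i ∈ Finset.range k, (-1:ℝ) ^ i * (∏ j ∈ Finset.range (i + 1), (b (k - j) : ℝ))⁻¹) := by
        rw [Finset.sum_neg_distrib, ← Finset.mul_sum]
        ring
  _ = (1 - ∑ i ∈ Finset.range k, (-1:ℝ) ^ i * (∏ j ∈ Finset.range (i + 1), (b (k - j) : ℝ))⁻¹) / (b (k+1) : ℝ) := by
        ring
/-! ### Dk = s/m -/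

lemma Dk_eq (hb : Good b) : ∀ k, Dk b k = (sseq b k : ℝ) / (mseq b k : ℝ) := by
  intro k
  induction k with
  | zero => simp [Dk, sseq, mseq]
  | succ k ih =>
    have hm : (mseq b k : ℝ) ≠ 0 := by
      have := m_pos hb k; positivity
    have hB : (b (k+1) : ℝ) ≠ 0 := by
      have := hb (k+1) (by omega); positivity
    have hcast : (sseq b (k+1) : ℝ) = (mseq b k : ℝ) - (sseq b k : ℝ) := by
      have h1 : sseq b (k+1) = mseq b k - sseq b k := rfl
      rw [h1, Nat.cast_sub (s_le_m' hb k)]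
    have hm1 : (mseq b (k+1) : ℝ) = (mseq b k : ℝ) * (b (k+1) : ℝ) := by
      have h1 : mseq b (k+1) = mseq b k * b (k+1) := rfl
      rw [h1, Nat.cast_mul]
    rw [Dk_succ, ih, hcast, hm1]
    field_simp

/-! ### real sequences -/

noncomputable def vR (b : ℕ → ℕ) (k : ℕ) : ℝ :=
  2 * (mseq b k : ℝ) / ((mseq b k : ℝ) + (sseq b k : ℝ))
noncomputable def eR (b : ℕ → ℕ) (k : ℕ) : ℝ :=
  4 / ((mseq b k : ℝ) + (sseq b k : ℝ))
noncomputable def fL (b : ℕ → ℕ) (x : ℕ) : ℝ :=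
  ((countBelow (Aset b) x : ℝ) * (countBelow (Bset b) x : ℝ)) / (x : ℝ)

lemma ms_pos (hb : Good b) (k : ℕ) : (0:ℝ) < (mseq b k : ℝ) + (sseq b k : ℝ) := by
  have := m_pos hb k
  have : (1:ℝ) ≤ (mseq b k : ℝ) := by exact_mod_cast this
  have h2 : (0:ℝ) ≤ (sseq b k : ℝ) := by positivity
  linarith

lemma vR_eq (hb : Good b) (k : ℕ) : 2 / (1 + Dk b k) = vR b k := by
  rw [Dk_eq hb k]
  have hm : (0:ℝ) < (mseq b k : ℝ) := by
    have := m_pos hb k; exact_mod_cast this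
  have hs : (0:ℝ) ≤ (sseq b k : ℝ) := by positivity
  have h1 : (0:ℝ) < 1 + (sseq b k : ℝ) / (mseq b k : ℝ) := by positivity
  have h2 := ms_pos hb k
  unfold vR
  rw [div_eq_div_iff (ne_of_gt h1) (ne_of_gt h2)]
  field_simp

lemma vR_nonneg (hb : Good b) (k : ℕ) : 0 ≤ vR b k := by
  have h1 := ms_pos hb k
  have : (0:ℝ) ≤ (mseq b k : ℝ) := by positivity
  unfold vR; positivity

lemma vR_le_two (hb : Good b) (k : ℕ) : vR b k ≤ 2 := by
  have h1 := ms_pos hb k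
  have hs : (0:ℝ) ≤ (sseq b k : ℝ) := by positivity
  unfold vR
  rw [div_le_iff₀ h1]
  linarith

lemma eR_nonneg (hb : Good b) (k : ℕ) : 0 ≤ eR b k := by
  have h1 := ms_pos hb k
  unfold eR; positivity

lemma wR_split (hb : Good b) (k : ℕ) :
    (2 * (mseq b k : ℝ) + 4) / ((mseq b k : ℝ) + (sseq b k : ℝ)) = vR b k + eR b k := by
  unfold vR eR
  rw [← add_div]

lemma eR_tendsto (hb : Good b) : Tendsto (eR b) atTop (nhds 0) := by
  have hbound : ∀ k : ℕ, eR b k ≤ 4 / ((k : ℝ) + 1) := by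
    intro k
    have h1 : (k:ℝ) + 1 ≤ (mseq b k : ℝ) + (sseq b k : ℝ) := by
      have h2 : k + 1 ≤ mseq b k := lt_m hb k
      have h3 : (k+1:ℝ) ≤ (mseq b k : ℝ) := by exact_mod_cast h2
      have h4 : (0:ℝ) ≤ (sseq b k : ℝ) := by positivity
      linarith
    have h5 : (0:ℝ) < (k:ℝ) + 1 := by positivity
    unfold eR
    apply div_le_div_of_nonneg_left (by norm_num) h5 h1
  have hlow : ∀ k : ℕ, 0 ≤ eR b k := eR_nonneg hb
  have htend : Tendsto (fun k : ℕ => 4 / ((k : ℝ) + 1)) atTop (nhds 0) := by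
    have h := tendsto_one_div_add_atTop_nhds_zero_nat (𝕜 := ℝ)
    have h4 : Tendsto (fun n : ℕ => 4 * (1 / ((n : ℝ) + 1))) atTop (nhds (4 * 0)) :=
      h.const_mul 4
    simpa [div_eq_mul_inv] using h4
  exact squeeze_zero hlow hbound htend

/-! ### the main per-block bound -/

lemma block_bound (hb : Good b) {k x : ℕ} (hk1 : 1 ≤ k) (hk : mseq b k ≤ x)
    (hk2 : x < mseq b (k+1)) :
    ((x+1) + (NS b x).card) * (mseq b k + sseq b k) ≤ (2 * mseq b k + 4) * x := by
  have hs := s_le_m' hb k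
  have hm := m_pos hb k
  obtain ⟨j, hj⟩ : ∃ j, k = j + 1 := ⟨k-1, by omega⟩
  have hspos : 1 ≤ sseq b k := hj ▸ s_pos hb j
  rcases Nat.lt_or_ge x (mseq b k + sseq b k) with hc|hc
  · have h2 : (NS b x).card + 2 * sseq b k ≤ x + 1 := by
      rw [hj]
      exact NS_card_le2 hb (hj ▸ hk) (hj ▸ hc)
    -- F ≤ 2x+2-2s ; m ≤ x ≤ m+s-1 ; 1 ≤ s ≤ m
    zify at *
    nlinarith [h2, hc, hk, hspos, hs, hm,
      mul_nonneg (show (0:ℤ) ≤ (mseq b k : ℤ) + sseq b k - 1 - x by omega)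
        (show (0:ℤ) ≤ (sseq b k : ℤ) by omega),
      mul_nonneg (show (0:ℤ) ≤ (sseq b k : ℤ) - 1 by omega)
        (show (0:ℤ) ≤ (mseq b k : ℤ) + sseq b k by omega)]
  · have h1 : (NS b x).card + sseq b k ≤ mseq b k := NS_card_le hb hk hk2
    zify at *
    nlinarith [h1, hc, hs, hm,
      mul_nonneg (show (0:ℤ) ≤ (x:ℤ) - (mseq b k + sseq b k) by omega)
        (show (0:ℤ) ≤ (mseq b k : ℤ) - sseq b k by omega),
      mul_nonneg (show (0:ℤ) ≤ (x:ℤ) - (mseq b k + sseq b k) by omega)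
        (show (0:ℤ) ≤ (4:ℤ) by omega),
      mul_nonneg (show (0:ℤ) ≤ (mseq b k : ℤ) - sseq b k by omega)
        (show (0:ℤ) ≤ (mseq b k : ℤ) + sseq b k by omega)]

lemma fL_block (hb : Good b) {k x : ℕ} (hk1 : 1 ≤ k) (hk : mseq b k ≤ x)
    (hk2 : x < mseq b (k+1)) : fL b x ≤ vR b k + eR b k := by
  rw [← wR_split hb]
  have hx : 0 < x := lt_of_lt_of_le (m_pos hb k) hk
  have hxR : (0:ℝ) < (x:ℝ) := by exact_mod_cast hx
  have hms := ms_pos hb k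
  unfold fL
  rw [div_le_div_iff₀ hxR hms]
  have hF : countBelow (Aset b) x * countBelow (Bset b) x = (x+1) + (NS b x).card :=
    countBelow_mul hb x
  have hNb := block_bound hb hk1 hk hk2
  have hNat : (countBelow (Aset b) x * countBelow (Bset b) x) * (mseq b k + sseq b k)
      ≤ (2 * mseq b k + 4) * x := by rw [hF]; exact hNb
  exact_mod_cast hNat

lemma fL_nonneg (b : ℕ → ℕ) (x : ℕ) : 0 ≤ fL b x := by
  unfold fL; positivity

lemma fL_le_three (hb : Good b) (x : ℕ) : fL b x ≤ 3 := by
  rcases Nat.eq_zero_or_pos x with h|h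
  · unfold fL; rw [h]; norm_num
  · have hF : countBelow (Aset b) x * countBelow (Bset b) x = (x+1) + (NS b x).card :=
      countBelow_mul hb x
    have hNS : (NS b x).card ≤ x := by
      have hsub : NS b x ⊆ Finset.Ioc x (2*x) := Finset.filter_subset _ _
      have := Finset.card_le_card hsub
      rw [Nat.card_Ioc] at this
      omega
    have hxR : (0:ℝ) < (x:ℝ) := by exact_mod_cast h
    unfold fL
    rw [div_le_iff₀ hxR]
    have h3 : countBelow (Aset b) x * countBelow (Bset b) x ≤ 3 * x := by omega
    have h4 : ((countBelow (Aset b) x * countBelow (Bset b) x : ℕ) : ℝ) ≤ ((3*x : ℕ):ℝ) := by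
      exact_mod_cast h3
    push_cast at h4 ⊢
    linarith

lemma fL_at_xk (hb : Good b) (k : ℕ) : vR b k ≤ fL b (mseq b k + sseq b k) := by
  set x := mseq b k + sseq b k with hx
  have hms := ms_pos hb k
  have hcast : ((x:ℕ):ℝ) = (mseq b k : ℝ) + (sseq b k : ℝ) := by
    rw [hx]; push_cast; ring
  have hF : 2 * mseq b k ≤ countBelow (Aset b) x * countBelow (Bset b) x := by
    rw [countBelow_A hb, countBelow_B hb, ← FS_card hb]
    exact FS_lower hb k
  have hFR : (2 * (mseq b k : ℝ)) ≤ ((countBelow (Aset b) x * countBelow (Bset b) x : ℕ) : ℝ) := by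
    exact_mod_cast hF
  have h2m : (2:ℝ) * (mseq b k : ℝ)
      ≤ (countBelow (Aset b) x : ℝ) * (countBelow (Bset b) x : ℝ) := by
    push_cast at hFR
    linarith
  unfold vR fL
  rw [hcast]
  exact (div_le_div_iff_of_pos_right hms).mpr h2m
/-! ### block index -/

def Kf (b : ℕ → ℕ) (x : ℕ) : ℕ := Nat.findGreatest (fun t => mseq b t ≤ x) x

lemma Kf_le (hb : Good b) {x : ℕ} (hx : 1 ≤ x) : mseq b (Kf b x) ≤ x := by
  have hP0 : mseq b 0 ≤ x := by simpa [mseq] using hx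
  exact Nat.findGreatest_spec (P := fun t => mseq b t ≤ x) (Nat.zero_le x) hP0

lemma Kf_lt (hb : Good b) {x : ℕ} (hx : 1 ≤ x) : x < mseq b (Kf b x + 1) := by
  by_contra h
  push_neg at h
  have h2 : Kf b x + 1 ≤ x := le_trans (le_of_lt (lt_m hb (Kf b x + 1))) h
  exact Nat.findGreatest_is_greatest (Nat.lt_succ_self _) h2 h

lemma le_Kf (hb : Good b) {j x : ℕ} (hj : mseq b j ≤ x) : j ≤ Kf b x :=
  Nat.le_findGreatest (le_trans (le_of_lt (lt_m hb j)) hj) hj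

lemma Kf_tendsto (hb : Good b) : Tendsto (Kf b) atTop atTop :=
  tendsto_atTop_atTop.mpr fun j => ⟨mseq b j, fun _ hx => le_Kf hb hx⟩

/-! ### the limsup equality -/

lemma limsup_eq_main (hb : Good b) :
    limsup (fL b) atTop = limsup (vR b) atTop := by
  have hfB : IsBoundedUnder (· ≤ ·) atTop (fL b) :=
    isBoundedUnder_of ⟨3, fL_le_three hb⟩
  have hflB : IsBoundedUnder (· ≥ ·) atTop (fL b) :=
    isBoundedUnder_of ⟨0, fun x => fL_nonneg b x⟩
  have hfC : IsCoboundedUnder (· ≤ ·) atTop (fL b) := hflB.isCoboundedUnder_le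
  have hvB : IsBoundedUnder (· ≤ ·) atTop (vR b) :=
    isBoundedUnder_of ⟨2, vR_le_two hb⟩
  have hvlB : IsBoundedUnder (· ≥ ·) atTop (vR b) :=
    isBoundedUnder_of ⟨0, vR_nonneg hb⟩
  have hvC : IsCoboundedUnder (· ≤ ·) atTop (vR b) := hvlB.isCoboundedUnder_le
  apply le_antisymm
  · apply le_of_forall_gt_imp_ge_of_dense
    intro c hc
    set c' := (limsup (vR b) atTop + c)/2 with hc'
    have hc1 : limsup (vR b) atTop < c' := by rw [hc']; linarith
    have hc2 : c' < c := by rw [hc']; linarith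
    have h1 : ∀ᶠ k in atTop, vR b k < c' := eventually_lt_of_limsup_lt hc1 hvB
    have h2 : ∀ᶠ k in atTop, eR b k < c - c' :=
      (eR_tendsto hb).eventually_lt_const (by linarith)
    have h3 : ∀ᶠ k in atTop, vR b k + eR b k ≤ c :=
      (h1.and h2).mono fun k hk => by linarith [hk.1, hk.2]
    have h4 : ∀ᶠ x in atTop, vR b (Kf b x) + eR b (Kf b x) ≤ c :=
      (Kf_tendsto hb).eventually h3
    have h5 : ∀ᶠ x in atTop, mseq b 1 ≤ x := eventually_ge_atTop _
    have h6 : ∀ᶠ x in atTop, fL b x ≤ c := by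
      refine (h4.and h5).mono fun x hx => ?_
      obtain ⟨h4x, h5x⟩ := hx
      have hx1 : 1 ≤ x := le_trans (m_pos hb 1) h5x
      have hk1 : 1 ≤ Kf b x := le_Kf hb h5x
      have hk2 : mseq b (Kf b x) ≤ x := Kf_le hb hx1
      have hk3 : x < mseq b (Kf b x + 1) := Kf_lt hb hx1
      exact le_trans (fL_block hb hk1 hk2 hk3) h4x
    exact limsup_le_of_le hfC h6
  · apply le_of_forall_lt_imp_le_of_dense
    intro c hc
    have h1 : ∃ᶠ k in atTop, c < vR b k := frequently_lt_of_lt_limsup hvC hc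
    have h2 : ∃ᶠ x in atTop, c ≤ fL b x := by
      rw [frequently_atTop] at h1 ⊢
      intro N
      obtain ⟨k, hkN, hk⟩ := h1 N
      refine ⟨mseq b k + sseq b k, ?_, ?_⟩
      · have := lt_m hb k; omega
      · exact le_trans (le_of_lt hk) (fL_at_xk hb k)
    exact le_limsup_of_frequently_le h2 hfB

end FC

theorem stmt3 (b : ℕ → ℕ) (hb0 : b 0 = 1) (hb : ∀ j, 1 ≤ j → 2 ≤ b j) :
    ∃ A B : Set ℕ, AddComp A B ∧
      limsup (fun x : ℕ => ((countBelow A x : ℝ) * countBelow B x) / x) atTop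
        = limsup (fun k : ℕ => 2 / (1 + Dk b k)) atTop ∧
      {x : ℕ | 0 < x ∧ countBelow A x * countBelow B x = x + 1}.Infinite := by

  have hG : FC.Good b := hb
  refine ⟨FC.Aset b, FC.Bset b, FC.addComp_AB hG, ?_, ?_⟩
  · have h2 : (fun k : ℕ => 2 / (1 + Dk b k)) = FC.vR b := funext (FC.vR_eq hG)
    rw [h2]
    exact FC.limsup_eq_main hG
  · apply Set.infinite_of_injective_forall_mem (f := fun k => FC.mseq b (k+1) - 1)
    case hi =>
      intro a c h
      simp only at h
      have ha := FC.m_pos hG (a+1)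
      have hc := FC.m_pos hG (c+1)
      have h3 : FC.mseq b (a+1) = FC.mseq b (c+1) := by omega
      have := (FC.m_strictMono hG).injective h3
      omega
    case hf =>
      intro k
      have h2 : 2 * FC.mseq b k ≤ FC.mseq b (k+1) := FC.two_mul_m_le hG k
      have hm := FC.m_pos hG k
      constructor
      · omega
      · rw [FC.countBelow_A hG, FC.countBelow_B hG, ← FC.FS_card hG, FC.FS_eq_at hG k]
        omega
end

section
/- Let {b_j} satisfy b_0 = 1 and b_j ≥ 2 for j ≥ 1, and let A, B, z_k be as in the mixed-radix construction. If x ∈ B has the form x = ε_1 a_1 + ε_3 a_3 + ε_5 a_5 + ⋯ + ε_{2k−1} a_{2k−1} + ε_{2k+1} a_{2k+1} with 0 ≤ ε_{2j+1} ≤ b_{2j+2} − 1 and ε_{2k+1} ≥ 1, then A(x)B(x)/x ≤ A(z_k)B(z_k)/z_k. -/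
open Filter

/-- `aSeq b j = Π_{i=0}^{j} b_i`. -/
def aSeq (b : ℕ → ℕ) (j : ℕ) : ℕ := ∏ i ∈ Finset.range (j + 1), b i

/-- The set of non-negative integers using only even-indexed digits in the
mixed-radix system associated to `b`. -/
def mixA (b : ℕ → ℕ) : Set ℕ :=
  { m | ∃ N : ℕ, ∃ ε : ℕ → ℕ, (∀ j, ε j ≤ b (2 * j + 1) - 1) ∧
      m = ∑ j ∈ Finset.range N, ε j * aSeq b (2 * j) }

/-- The set of non-negative integers using only odd-indexed digits in the
mixed-radix system associated to `b`. -/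
def mixB (b : ℕ → ℕ) : Set ℕ :=
  { m | ∃ N : ℕ, ∃ ε : ℕ → ℕ, (∀ j, ε j ≤ b (2 * j + 2) - 1) ∧
      m = ∑ j ∈ Finset.range N, ε j * aSeq b (2 * j + 1) }

/-- `zk b k = (b_2-1)a_1 + (b_4-1)a_3 + ⋯ + (b_{2k}-1)a_{2k-1} + a_{2k+1}`. -/
def zk (b : ℕ → ℕ) (k : ℕ) : ℕ :=
  (∑ i ∈ Finset.range k, (b (2 * i + 2) - 1) * aSeq b (2 * i + 1)) + aSeq b (2 * k + 1)

namespace S10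


lemma aSeq_succ (b : ℕ → ℕ) (j : ℕ) : aSeq b (j+1) = aSeq b j * b (j+1) :=
  Finset.prod_range_succ b (j+1)

lemma aSeq_pos (b : ℕ → ℕ) (hb1 : ∀ i, 1 ≤ b i) (j : ℕ) : 1 ≤ aSeq b j :=
  Finset.one_le_prod' (fun i _ => hb1 i)

lemma aSeq_mono (b : ℕ → ℕ) (hb1 : ∀ i, 1 ≤ b i) : Monotone (aSeq b) :=
  monotone_nat_of_le_succ fun j => by
    rw [aSeq_succ]; exact Nat.le_mul_of_pos_right _ (hb1 _)

/-- one-directional lexicographic transfer -/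
lemma lex_lt (c u w : ℕ → ℕ)
    (hu : ∀ N, (∑ j ∈ Finset.range N, (c j - 1) * u j) < u N)
    (hw : ∀ N, (∑ j ∈ Finset.range N, (c j - 1) * w j) < w N) :
    ∀ N (δ ε : ℕ → ℕ), (∀ j, j < N → δ j ≤ c j - 1) → (∀ j, j < N → ε j ≤ c j - 1) →
      (∑ j ∈ Finset.range N, δ j * u j) < (∑ j ∈ Finset.range N, ε j * u j) →
      (∑ j ∈ Finset.range N, δ j * w j) < (∑ j ∈ Finset.range N, ε j * w j) := by
  intro N
  induction N with
  | zero => intro δ ε _ _ h; simp at h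
  | succ N ih =>
    intro δ ε hδ hε h
    simp only [Finset.sum_range_succ] at h ⊢
    rcases lt_trichotomy (δ N) (ε N) with hlt | heq | hgt
    · have h1 : ∑ j ∈ Finset.range N, δ j * w j ≤ ∑ j ∈ Finset.range N, (c j - 1) * w j :=
        Finset.sum_le_sum fun j hj =>
          Nat.mul_le_mul_right _ (hδ j ((Finset.mem_range.mp hj).trans (Nat.lt_succ_self N)))
      have h2 : ∑ j ∈ Finset.range N, δ j * w j < w N := lt_of_le_of_lt h1 (hw N)
      have h3 : (δ N + 1) * w N ≤ ε N * w N := Nat.mul_le_mul_right _ hlt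
      have h4 : (δ N + 1) * w N = δ N * w N + w N := by ring
      have h5 : (0:ℕ) ≤ ∑ j ∈ Finset.range N, ε j * w j := Nat.zero_le _
      omega
    · rw [heq] at h ⊢
      have h' : (∑ j ∈ Finset.range N, δ j * u j) < ∑ j ∈ Finset.range N, ε j * u j := by omega
      have := ih δ ε (fun j hj => hδ j (hj.trans (Nat.lt_succ_self N)))
        (fun j hj => hε j (hj.trans (Nat.lt_succ_self N))) h'
      omega
    · exfalso
      have h1 : ∑ j ∈ Finset.range N, ε j * u j ≤ ∑ j ∈ Finset.range N, (c j - 1) * u j :=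
        Finset.sum_le_sum fun j hj =>
          Nat.mul_le_mul_right _ (hε j ((Finset.mem_range.mp hj).trans (Nat.lt_succ_self N)))
      have h2 : ∑ j ∈ Finset.range N, ε j * u j < u N := lt_of_le_of_lt h1 (hu N)
      have h3 : (ε N + 1) * w N ≤ δ N * w N := Nat.mul_le_mul_right _ hgt
      have h3' : (ε N + 1) * u N ≤ δ N * u N := Nat.mul_le_mul_right _ hgt
      have h4 : (ε N + 1) * u N = ε N * u N + u N := by ring
      have h5 : (0:ℕ) ≤ ∑ j ∈ Finset.range N, δ j * u j := Nat.zero_le _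
      omega

lemma lex_le (c u w : ℕ → ℕ)
    (hu : ∀ N, (∑ j ∈ Finset.range N, (c j - 1) * u j) < u N)
    (hw : ∀ N, (∑ j ∈ Finset.range N, (c j - 1) * w j) < w N)
    (N : ℕ) (δ ε : ℕ → ℕ) (hδ : ∀ j, j < N → δ j ≤ c j - 1) (hε : ∀ j, j < N → ε j ≤ c j - 1)
    (h : (∑ j ∈ Finset.range N, δ j * u j) ≤ ∑ j ∈ Finset.range N, ε j * u j) :
    (∑ j ∈ Finset.range N, δ j * w j) ≤ ∑ j ∈ Finset.range N, ε j * w j := by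
  by_contra hcon
  push_neg at hcon
  exact absurd (lex_lt c w u hw hu N ε δ hε hδ hcon) (not_lt.mpr h)

lemma mixedRadix_sum (c : ℕ → ℕ) (n : ℕ) :
    ∀ k, ∑ j ∈ Finset.range k,
        (n / ∏ i ∈ Finset.range j, c i) % c j * ∏ i ∈ Finset.range j, c i
      = n % ∏ i ∈ Finset.range k, c i := by
  intro k
  induction k with
  | zero => simp [Nat.mod_one]
  | succ k ih =>
    rw [Finset.sum_range_succ, ih, Finset.prod_range_succ, Nat.mod_mul]
    ring

lemma tele (c : ℕ → ℕ) (hc : ∀ j, 1 ≤ c j) :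
    ∀ N, (∑ j ∈ Finset.range N, (c j - 1) * ∏ i ∈ Finset.range j, c i) + 1
      = ∏ i ∈ Finset.range N, c i := by
  intro N
  induction N with
  | zero => simp
  | succ N ih =>
    rw [Finset.sum_range_succ, Finset.prod_range_succ]
    have h1 : c N - 1 + 1 = c N := Nat.sub_add_cancel (hc N)
    have h2 : (c N - 1) * ∏ i ∈ Finset.range N, c i + ∏ i ∈ Finset.range N, c i
        = ((c N - 1) + 1) * ∏ i ∈ Finset.range N, c i := by ring
    rw [h1] at h2
    have := mul_comm (∏ i ∈ Finset.range N, c i) (c N)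
    omega



lemma Tbound (b : ℕ → ℕ) (hb1 : ∀ i, 1 ≤ b i) :
    ∀ N, (∑ j ∈ Finset.range N, (b (2*j+2) - 1) * aSeq b (2*j+1)) + 1 ≤ aSeq b (2*N) := by
  intro N
  induction N with
  | zero => simpa using aSeq_pos b hb1 0
  | succ N ih =>
    rw [Finset.sum_range_succ]
    have h1 : aSeq b (2*N) ≤ aSeq b (2*N+1) := aSeq_mono b hb1 (Nat.le_succ _)
    have h2 : aSeq b (2*(N+1)) = aSeq b (2*N+1) * b (2*N+2) := by
      have : 2*(N+1) = (2*N+1)+1 := by ring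
      rw [this, aSeq_succ]
    have h3 : (b (2*N+2) - 1) * aSeq b (2*N+1) + aSeq b (2*N+1)
        = (b (2*N+2) - 1 + 1) * aSeq b (2*N+1) := by ring
    rw [Nat.sub_add_cancel (hb1 _)] at h3
    have h5 := mul_comm (aSeq b (2*N+1)) (b (2*N+2))
    omega

lemma Sbound (b : ℕ → ℕ) (hb1 : ∀ i, 1 ≤ b i) :
    ∀ N, (∑ j ∈ Finset.range N, (b (2*j+1) - 1) * aSeq b (2*j)) + 1 ≤ aSeq b (2*N) := by
  intro N
  induction N with
  | zero => simpa using aSeq_pos b hb1 0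
  | succ N ih =>
    rw [Finset.sum_range_succ]
    have h2 : aSeq b (2*N+1) = aSeq b (2*N) * b (2*N+1) := aSeq_succ b (2*N)
    have h2' : aSeq b (2*(N+1)) = aSeq b (2*N+1) * b (2*(N+1)) := by
      have : 2*(N+1) = (2*N+1)+1 := by ring
      rw [this, aSeq_succ]
    have h1 : aSeq b (2*N+1) ≤ aSeq b (2*(N+1)) := by
      rw [h2']; exact Nat.le_mul_of_pos_right _ (hb1 _)
    have h3 : (b (2*N+1) - 1) * aSeq b (2*N) + aSeq b (2*N)
        = (b (2*N+1) - 1 + 1) * aSeq b (2*N) := by ring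
    rw [Nat.sub_add_cancel (hb1 _)] at h3
    have h5 := mul_comm (aSeq b (2*N)) (b (2*N+1))
    omega

lemma Sbound' (b : ℕ → ℕ) (hb1 : ∀ i, 1 ≤ b i) (N : ℕ) :
    (∑ j ∈ Finset.range (N+1), (b (2*j+1) - 1) * aSeq b (2*j)) + 1 ≤ aSeq b (2*N+1) := by
  rw [Finset.sum_range_succ]
  have h0 := Sbound b hb1 N
  have h2 : aSeq b (2*N+1) = aSeq b (2*N) * b (2*N+1) := aSeq_succ b (2*N)
  have h3 : (b (2*N+1) - 1) * aSeq b (2*N) + aSeq b (2*N)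
      = (b (2*N+1) - 1 + 1) * aSeq b (2*N) := by ring
  rw [Nat.sub_add_cancel (hb1 _)] at h3
  have h5 := mul_comm (aSeq b (2*N)) (b (2*N+1))
  omega

lemma gapA (b : ℕ → ℕ) (hb1 : ∀ i, 1 ≤ b i) (k : ℕ) (y : ℕ) (hy : y ∈ mixA b)
    (hlt : y < aSeq b (2*k+2)) : y < aSeq b (2*k+1) := by
  obtain ⟨N, δ, hδ, rfl⟩ := hy
  by_cases hhigh : ∀ j, j < N → k+1 ≤ j → δ j = 0
  · have h1 : ∑ j ∈ (Finset.range N).filter (· < k+1), δ j * aSeq b (2*j)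
        = ∑ j ∈ Finset.range N, δ j * aSeq b (2*j) := by
      apply Finset.sum_filter_of_ne
      intro j hj hne
      by_contra hk
      push_neg at hk
      exact hne (by rw [hhigh j (Finset.mem_range.mp hj) hk]; simp)
    have h2 : (Finset.range N).filter (· < k+1) ⊆ Finset.range (k+1) := by
      intro j hj
      exact Finset.mem_range.mpr (Finset.mem_filter.mp hj).2
    have h3 : ∑ j ∈ (Finset.range N).filter (· < k+1), δ j * aSeq b (2*j)
        ≤ ∑ j ∈ Finset.range (k+1), δ j * aSeq b (2*j) :=
      Finset.sum_le_sum_of_subset h2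
    have h4 : ∑ j ∈ Finset.range (k+1), δ j * aSeq b (2*j)
        ≤ ∑ j ∈ Finset.range (k+1), (b (2*j+1) - 1) * aSeq b (2*j) :=
      Finset.sum_le_sum fun j _ => Nat.mul_le_mul_right _ (hδ j)
    have h5 := Sbound' b hb1 k
    omega
  · exfalso
    push_neg at hhigh
    obtain ⟨j, hjN, hjk, hj0⟩ := hhigh
    have h1 : aSeq b (2*j) ≤ δ j * aSeq b (2*j) :=
      Nat.le_mul_of_pos_left _ (Nat.pos_of_ne_zero hj0)
    have h2 : δ j * aSeq b (2*j) ≤ ∑ j ∈ Finset.range N, δ j * aSeq b (2*j) :=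
      Finset.single_le_sum (f := fun j => δ j * aSeq b (2*j)) (fun i _ => Nat.zero_le _) (Finset.mem_range.mpr hjN)
    have h3 : aSeq b (2*k+2) ≤ aSeq b (2*j) := aSeq_mono b hb1 (by omega)
    omega



lemma countB_eq (b : ℕ → ℕ) (hb0 : b 0 = 1) (hb : ∀ j, 1 ≤ j → 2 ≤ b j)
    (k : ℕ) (ε : ℕ → ℕ) (hεv : ∀ j, j < k+1 → ε j ≤ b (2*j+2) - 1) :
    countBelow (mixB b) (∑ j ∈ Finset.range (k+1), ε j * aSeq b (2*j+1))
      = (∑ j ∈ Finset.range (k+1), ε j * ∏ i ∈ Finset.range j, b (2*i+2)) + 1 := by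
  have hb1 : ∀ i, 1 ≤ b i := by
    intro i
    rcases Nat.eq_zero_or_pos i with h | h
    · simp [h, hb0]
    · exact le_trans one_le_two (hb i h)
  set c : ℕ → ℕ := fun j => b (2*j+2) with hc_def
  have hc2 : ∀ j, 2 ≤ c j := fun j => hb _ (by omega)
  have hc1 : ∀ j, 1 ≤ c j := fun j => le_trans one_le_two (hc2 j)
  set Q : ℕ → ℕ := fun j => ∏ i ∈ Finset.range j, c i with hQ_def
  set w : ℕ → ℕ := fun j => aSeq b (2*j+1) with hw_def
  have hQ1 : ∀ j, 1 ≤ Q j := fun j => Finset.one_le_prod' (fun i _ => hc1 i)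
  have hu : ∀ N, (∑ j ∈ Finset.range N, (c j - 1) * Q j) < Q N := by
    intro N
    have := tele c hc1 N
    simp only [hQ_def]
    omega
  have hwb : ∀ N, (∑ j ∈ Finset.range N, (c j - 1) * w j) < w N := by
    intro N
    have h1 := Tbound b hb1 N
    have h2 : aSeq b (2*N) ≤ aSeq b (2*N+1) := aSeq_mono b hb1 (Nat.le_succ _)
    simp only [hw_def, hc_def]
    omega
  -- digits of n
  set dig : ℕ → ℕ → ℕ := fun n j => (n / Q j) % c j with hdig_def
  have hdig_v : ∀ n j, dig n j ≤ c j - 1 := by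
    intro n j
    have : dig n j < c j := Nat.mod_lt _ (by have := hc2 j; omega)
    omega
  have hdig_sum : ∀ n, n < Q (k+1) → ∑ j ∈ Finset.range (k+1), dig n j * Q j = n := by
    intro n hn
    have := mixedRadix_sum c n (k+1)
    simp only [hdig_def, hQ_def]
    rw [this]
    exact Nat.mod_eq_of_lt hn
  set R := ∑ j ∈ Finset.range (k+1), ε j * Q j with hR_def
  have hRlt : R < Q (k+1) := by
    have h1 : R ≤ ∑ j ∈ Finset.range (k+1), (c j - 1) * Q j :=
      Finset.sum_le_sum fun j hj =>
        Nat.mul_le_mul_right _ (hεv j (Finset.mem_range.mp hj))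
    have h2 := tele c hc1 (k+1)
    have hQapp : ∀ j, (∏ i ∈ Finset.range j, c i) = Q j := fun j => rfl
    simp only [hQapp] at h2
    omega
  set x := ∑ j ∈ Finset.range (k+1), ε j * w j with hx_def
  set V : ℕ → ℕ := fun n => ∑ j ∈ Finset.range (k+1), dig n j * w j with hV_def
  have hxlt : x + 1 ≤ aSeq b (2*k+2) := by
    have h1 : x ≤ ∑ j ∈ Finset.range (k+1), (c j - 1) * w j :=
      Finset.sum_le_sum fun j hj =>
        Nat.mul_le_mul_right _ (hεv j (Finset.mem_range.mp hj))
    have h2 := Tbound b hb1 (k+1)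
    have h3 : 2*(k+1) = 2*k+2 := by ring
    rw [h3] at h2
    simp only [hw_def, hc_def] at h1
    omega
  have hset : mixB b ∩ Set.Iic x = V '' Set.Iic R := by
    ext y
    simp only [Set.mem_inter_iff, Set.mem_Iic, Set.mem_image]
    constructor
    · rintro ⟨⟨N, δ, hδ, rfl⟩, hyle⟩
      have hhigh : ∀ j, j < N → k+1 ≤ j → δ j = 0 := by
        intro j hjN hjk
        by_contra hj0
        have h1 : aSeq b (2*j+1) ≤ δ j * aSeq b (2*j+1) :=
          Nat.le_mul_of_pos_left _ (Nat.pos_of_ne_zero hj0)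
        have h2 : δ j * aSeq b (2*j+1) ≤ ∑ j ∈ Finset.range N, δ j * aSeq b (2*j+1) :=
          Finset.single_le_sum (f := fun j => δ j * aSeq b (2*j+1))
            (fun i _ => Nat.zero_le _) (Finset.mem_range.mpr hjN)
        have h3 : aSeq b (2*k+2) ≤ aSeq b (2*j+1) := aSeq_mono b hb1 (by omega)
        omega
      set δ' : ℕ → ℕ := fun j => if j < N then δ j else 0 with hδ'_def
      have hδ'v : ∀ j, j < k+1 → δ' j ≤ c j - 1 := by
        intro j _
        simp only [hδ'_def]
        split
        · exact hδ j
        · exact Nat.zero_le _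
      have hyeq : ∑ j ∈ Finset.range N, δ j * aSeq b (2*j+1)
          = ∑ j ∈ Finset.range (k+1), δ' j * w j := by
        simp only [hw_def]
        rcases le_total N (k+1) with hN | hN
        · rw [← Finset.sum_subset (Finset.range_subset_range.mpr hN)
            (fun j _ hj => by
              simp only [hδ'_def, if_neg (fun h => hj (Finset.mem_range.mpr h))]
              simp)]
          exact Finset.sum_congr rfl fun j hj => by
            simp [hδ'_def, Finset.mem_range.mp hj]
        · rw [← Finset.sum_subset (Finset.range_subset_range.mpr hN)
            (fun j hj hj' => by
              rw [hhigh j (Finset.mem_range.mp hj)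
                (le_of_not_gt (fun h => hj' (Finset.mem_range.mpr h)))]
              simp)]
          exact Finset.sum_congr rfl fun j hj => by
            simp [hδ'_def, lt_of_lt_of_le (Finset.mem_range.mp hj) hN]
      rw [hyeq] at hyle ⊢
      set n := ∑ j ∈ Finset.range (k+1), δ' j * Q j with hn_def
      have hnR : n ≤ R := by
        simp only [hn_def, hR_def]
        exact lex_le c w Q hwb hu (k+1) δ' ε hδ'v (fun j hj => hεv j hj) hyle
      refine ⟨n, hnR, ?_⟩
      have hdn : ∑ j ∈ Finset.range (k+1), dig n j * Q j
          = ∑ j ∈ Finset.range (k+1), δ' j * Q j :=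
        hdig_sum n (lt_of_le_of_lt hnR hRlt)
      simp only [hV_def]
      exact le_antisymm
        (lex_le c Q w hu hwb (k+1) (dig n) δ' (fun j _ => hdig_v n j) hδ'v hdn.le)
        (lex_le c Q w hu hwb (k+1) δ' (dig n) hδ'v (fun j _ => hdig_v n j) hdn.ge)
    · rintro ⟨n, hn, rfl⟩
      constructor
      · exact ⟨k+1, dig n, fun j => hdig_v n j, rfl⟩
      · have hdn := hdig_sum n (lt_of_le_of_lt hn hRlt)
        have : ∑ j ∈ Finset.range (k+1), dig n j * Q j ≤ ∑ j ∈ Finset.range (k+1), ε j * Q j := by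
          rw [hdn]; exact hn
        exact lex_le c Q w hu hwb (k+1) (dig n) ε (fun j _ => hdig_v n j)
          (fun j hj => hεv j hj) this
  have hinj : Set.InjOn V (Set.Iic R) := by
    intro m hm n hn hVmn
    simp only [Set.mem_Iic] at hm hn
    have hdm := hdig_sum m (lt_of_le_of_lt hm hRlt)
    have hdn := hdig_sum n (lt_of_le_of_lt hn hRlt)
    simp only [hV_def] at hVmn
    have h1 : m ≤ n := by
      rw [← hdm, ← hdn]
      exact lex_le c w Q hwb hu (k+1) (dig m) (dig n)
        (fun j _ => hdig_v m j) (fun j _ => hdig_v n j) hVmn.le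
    have h2 : n ≤ m := by
      rw [← hdm, ← hdn]
      exact lex_le c w Q hwb hu (k+1) (dig n) (dig m)
        (fun j _ => hdig_v n j) (fun j _ => hdig_v m j) hVmn.ge
    omega
  show (mixB b ∩ Set.Iic x).ncard = R + 1
  rw [hset, Set.ncard_image_of_injOn hinj, ← Finset.coe_Iic, Set.ncard_coe_finset, Nat.card_Iic]



lemma key (b : ℕ → ℕ) (hb1 : ∀ i, 1 ≤ b i) (hb : ∀ j, 1 ≤ j → 2 ≤ b j) :
    ∀ k j, j < k →
      2 * (∏ i ∈ Finset.range k, b (2*i+2)) * aSeq b (2*j+1)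
        ≤ (∏ i ∈ Finset.range j, b (2*i+2)) * aSeq b (2*k+1) := by
  intro k
  induction k with
  | zero => intro j h; exact absurd h (Nat.not_lt_zero j)
  | succ k ih =>
    intro j hj
    have hprod : ∏ i ∈ Finset.range (k+1), b (2*i+2)
        = (∏ i ∈ Finset.range k, b (2*i+2)) * b (2*k+2) := Finset.prod_range_succ _ k
    have haS : aSeq b (2*(k+1)+1) = aSeq b (2*k+1) * b (2*k+2) * b (2*k+3) := by
      rw [show 2*(k+1)+1 = (2*k+2)+1 by ring, aSeq_succ,
        show (2*k+2) = (2*k+1)+1 by ring, aSeq_succ]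
    rcases Nat.lt_succ_iff_lt_or_eq.mp hj with hjk | heq
    · have h1 := ih j hjk
      have h2 : 1 ≤ b (2*k+3) := hb1 _
      calc 2 * (∏ i ∈ Finset.range (k+1), b (2*i+2)) * aSeq b (2*j+1)
          = (2 * (∏ i ∈ Finset.range k, b (2*i+2)) * aSeq b (2*j+1)) * b (2*k+2) := by
            rw [hprod]; ring
        _ ≤ ((∏ i ∈ Finset.range j, b (2*i+2)) * aSeq b (2*k+1)) * b (2*k+2) :=
            Nat.mul_le_mul_right _ h1
        _ ≤ ((∏ i ∈ Finset.range j, b (2*i+2)) * aSeq b (2*k+1)) * b (2*k+2) * b (2*k+3) :=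
            Nat.le_mul_of_pos_right _ h2
        _ = (∏ i ∈ Finset.range j, b (2*i+2)) * aSeq b (2*(k+1)+1) := by rw [haS]; ring
    · rw [heq]
      have h2 : 2 ≤ b (2*k+3) := hb _ (by omega)
      calc 2 * (∏ i ∈ Finset.range (k+1), b (2*i+2)) * aSeq b (2*k+1)
          = ((∏ i ∈ Finset.range k, b (2*i+2)) * aSeq b (2*k+1) * b (2*k+2)) * 2 := by
            rw [hprod]; ring
        _ ≤ ((∏ i ∈ Finset.range k, b (2*i+2)) * aSeq b (2*k+1) * b (2*k+2)) * b (2*k+3) :=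
            Nat.mul_le_mul_left _ h2
        _ = (∏ i ∈ Finset.range k, b (2*i+2)) * aSeq b (2*(k+1)+1) := by rw [haS]; ring

lemma arith (Qk W T L M SDQ SDw e : ℕ)
    (hMQ : M + SDQ + 1 = Qk) (hLT : L + SDw = T) (h1 : 2*Qk*SDw ≤ SDQ * W)
    (hTW : T + 1 ≤ W) (he : 1 ≤ e) :
    (M + e*Qk + 1) * (T + W) ≤ 2*Qk*(L + e*W) := by
  obtain ⟨f, rfl⟩ : ∃ f, e = 1 + f := ⟨e-1, by omega⟩
  have s1 : (M + 1 + Qk) * T ≤ 2*Qk*T := Nat.mul_le_mul_right _ (by omega)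
  have s2 : 2*Qk*T = 2*Qk*L + 2*Qk*SDw := by rw [← hLT]; ring
  have hQ2 : M + 1 + Qk + SDQ = 2*Qk := by omega
  have s3 : (M + 1 + Qk) * W + SDQ * W = 2*Qk*W := by
    calc (M + 1 + Qk) * W + SDQ * W = (M + 1 + Qk + SDQ) * W := by ring
      _ = 2*Qk*W := by rw [hQ2]
  have s4 : (M + (1+f)*Qk + 1) * (T + W) = (M+1+Qk)*T + (M+1+Qk)*W + f*Qk*(T+W) := by ring
  have s5 : f*Qk*(T+W) ≤ f*Qk*(W+W) := Nat.mul_le_mul_left _ (by omega)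
  have s6 : 2*Qk*(L + (1+f)*W) = 2*Qk*L + 2*Qk*W + f*Qk*(W+W) := by ring
  omega


end S10

theorem stmt10 (b : ℕ → ℕ) (hb0 : b 0 = 1) (hb : ∀ j, 1 ≤ j → 2 ≤ b j)
    (k : ℕ) (hk : 1 ≤ k) (ε : ℕ → ℕ)
    (hε : ∀ j, j ≤ k → ε j ≤ b (2 * j + 2) - 1) (hεk : 1 ≤ ε k)
    (x : ℕ) (hx : x = ∑ j ∈ Finset.range (k + 1), ε j * aSeq b (2 * j + 1)) :
    ((countBelow (mixA b) x : ℝ) * countBelow (mixB b) x) / x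
      ≤ ((countBelow (mixA b) (zk b k) : ℝ) * countBelow (mixB b) (zk b k)) / (zk b k) := by
  have hb1 : ∀ i, 1 ≤ b i := by
    intro i
    rcases Nat.eq_zero_or_pos i with h | h
    · simp [h, hb0]
    · exact le_trans one_le_two (hb i h)
  have hW1 : 1 ≤ aSeq b (2*k+1) := S10.aSeq_pos b hb1 _
  have hxW : aSeq b (2*k+1) ≤ x := by
    rw [hx]
    have h1 : ε k * aSeq b (2*k+1) ≤ ∑ j ∈ Finset.range (k+1), ε j * aSeq b (2*j+1) :=
      Finset.single_le_sum (f := fun j => ε j * aSeq b (2*j+1)) (fun i _ => Nat.zero_le _)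
        (Finset.mem_range.mpr (Nat.lt_succ_self k))
    have h2 : aSeq b (2*k+1) ≤ ε k * aSeq b (2*k+1) := Nat.le_mul_of_pos_left _ hεk
    omega
  have hxlt : x + 1 ≤ aSeq b (2*k+2) := by
    rw [hx]
    have h1 : ∑ j ∈ Finset.range (k+1), ε j * aSeq b (2*j+1)
        ≤ ∑ j ∈ Finset.range (k+1), (b (2*j+2) - 1) * aSeq b (2*j+1) :=
      Finset.sum_le_sum fun j hj =>
        Nat.mul_le_mul_right _ (hε j (by have := Finset.mem_range.mp hj; omega))
    have h2 := S10.Tbound b hb1 (k+1)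
    rw [show 2*(k+1) = 2*k+2 by ring] at h2
    omega
  have hzW : aSeq b (2*k+1) ≤ zk b k := Nat.le_add_left _ _
  have hzlt : zk b k + 1 ≤ aSeq b (2*k+2) := by
    have hT := S10.Tbound b hb1 k
    have h1 : aSeq b (2*k) ≤ aSeq b (2*k+1) := S10.aSeq_mono b hb1 (by omega)
    have h2 : aSeq b (2*k+2) = aSeq b (2*k+1) * b (2*k+2) := by
      rw [show 2*k+2 = (2*k+1)+1 by ring, S10.aSeq_succ]
    have h3 : 2 ≤ b (2*k+2) := hb _ (by omega)
    have h4 : aSeq b (2*k+1) * 2 ≤ aSeq b (2*k+1) * b (2*k+2) := Nat.mul_le_mul_left _ h3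
    unfold zk
    omega
  -- A-counts agree
  have hA : countBelow (mixA b) x = countBelow (mixA b) (zk b k) := by
    unfold countBelow
    congr 1
    ext y
    simp only [Set.mem_inter_iff, Set.mem_Iic]
    constructor
    · rintro ⟨hyA, hyle⟩
      refine ⟨hyA, ?_⟩
      have := S10.gapA b hb1 k y hyA (by omega)
      omega
    · rintro ⟨hyA, hyle⟩
      refine ⟨hyA, ?_⟩
      have := S10.gapA b hb1 k y hyA (by omega)
      omega
  -- B-counts
  have hBx : countBelow (mixB b) x
      = (∑ j ∈ Finset.range (k+1), ε j * ∏ i ∈ Finset.range j, b (2*i+2)) + 1 := by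
    rw [hx]
    exact S10.countB_eq b hb0 hb k ε (fun j hj => hε j (by omega))
  set ζ : ℕ → ℕ := fun j => if j < k then b (2*j+2) - 1 else 1 with hζ_def
  have hzsum : zk b k = ∑ j ∈ Finset.range (k+1), ζ j * aSeq b (2*j+1) := by
    rw [Finset.sum_range_succ]
    simp only [hζ_def, if_neg (lt_irrefl k), one_mul]
    unfold zk
    congr 1
    apply Finset.sum_congr rfl
    intro j hj
    rw [if_pos (Finset.mem_range.mp hj)]
  have hBz : countBelow (mixB b) (zk b k)
      = (∑ j ∈ Finset.range (k+1), ζ j * ∏ i ∈ Finset.range j, b (2*i+2)) + 1 := by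
    rw [hzsum]
    refine S10.countB_eq b hb0 hb k ζ (fun j hj => ?_)
    simp only [hζ_def]
    split
    · exact le_refl _
    · have := hb (2*j+2) (by omega)
      omega
  have hQ1 : 1 ≤ ∏ i ∈ Finset.range k, b (2*i+2) :=
    Finset.one_le_prod' (fun i _ => hb1 _)
  have htele := S10.tele (fun j => b (2*j+2)) (fun j => hb1 _) k
  have hRζ : (∑ j ∈ Finset.range (k+1), ζ j * ∏ i ∈ Finset.range j, b (2*i+2)) + 1
      = 2 * ∏ i ∈ Finset.range k, b (2*i+2) := by
    rw [Finset.sum_range_succ]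
    simp only [hζ_def, if_neg (lt_irrefl k), one_mul]
    have h1 : ∑ j ∈ Finset.range k,
        (if j < k then b (2*j+2) - 1 else 1) * ∏ i ∈ Finset.range j, b (2*i+2)
        = ∑ j ∈ Finset.range k, (b (2*j+2) - 1) * ∏ i ∈ Finset.range j, b (2*i+2) :=
      Finset.sum_congr rfl fun j hj => by rw [if_pos (Finset.mem_range.mp hj)]
    rw [h1]
    omega
  -- the core numeric inequality
  set D : ℕ → ℕ := fun j => (b (2*j+2) - 1) - ε j with hD_def
  have hsplit : ∀ (u : ℕ → ℕ),
      (∑ j ∈ Finset.range k, ε j * u j) + (∑ j ∈ Finset.range k, D j * u j)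
        = ∑ j ∈ Finset.range k, (b (2*j+2) - 1) * u j := by
    intro u
    rw [← Finset.sum_add_distrib]
    apply Finset.sum_congr rfl
    intro j hj
    have hεj := hε j (le_of_lt (Finset.mem_range.mp hj))
    have h : ε j + D j = b (2*j+2) - 1 := by simp only [hD_def]; omega
    rw [← h]; ring
  have hMQ : (∑ j ∈ Finset.range k, ε j * ∏ i ∈ Finset.range j, b (2*i+2))
      + (∑ j ∈ Finset.range k, D j * ∏ i ∈ Finset.range j, b (2*i+2)) + 1
      = ∏ i ∈ Finset.range k, b (2*i+2) := by
    rw [hsplit (fun j => ∏ i ∈ Finset.range j, b (2*i+2))]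
    omega
  have hLT : (∑ j ∈ Finset.range k, ε j * aSeq b (2*j+1))
      + (∑ j ∈ Finset.range k, D j * aSeq b (2*j+1))
      = ∑ j ∈ Finset.range k, (b (2*j+2) - 1) * aSeq b (2*j+1) :=
    hsplit (fun j => aSeq b (2*j+1))
  have h1 : 2 * (∏ i ∈ Finset.range k, b (2*i+2))
        * (∑ j ∈ Finset.range k, D j * aSeq b (2*j+1))
      ≤ (∑ j ∈ Finset.range k, D j * ∏ i ∈ Finset.range j, b (2*i+2)) * aSeq b (2*k+1) := by
    calc 2 * (∏ i ∈ Finset.range k, b (2*i+2)) * (∑ j ∈ Finset.range k, D j * aSeq b (2*j+1))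
        = ∑ j ∈ Finset.range k, D j * (2 * (∏ i ∈ Finset.range k, b (2*i+2)) * aSeq b (2*j+1)) := by
          rw [Finset.mul_sum]
          exact Finset.sum_congr rfl fun j _ => by ring
      _ ≤ ∑ j ∈ Finset.range k, D j * ((∏ i ∈ Finset.range j, b (2*i+2)) * aSeq b (2*k+1)) :=
          Finset.sum_le_sum fun j hj =>
            Nat.mul_le_mul_left _ (S10.key b hb1 hb k j (Finset.mem_range.mp hj))
      _ = (∑ j ∈ Finset.range k, D j * ∏ i ∈ Finset.range j, b (2*i+2)) * aSeq b (2*k+1) := by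
          rw [Finset.sum_mul]
          exact Finset.sum_congr rfl fun j _ => by ring
  have hTW : (∑ j ∈ Finset.range k, (b (2*j+2) - 1) * aSeq b (2*j+1)) + 1 ≤ aSeq b (2*k+1) := by
    have hT := S10.Tbound b hb1 k
    have hm : aSeq b (2*k) ≤ aSeq b (2*k+1) := S10.aSeq_mono b hb1 (by omega)
    omega
  have hcore : ((∑ j ∈ Finset.range (k+1), ε j * ∏ i ∈ Finset.range j, b (2*i+2)) + 1)
        * zk b k
      ≤ (2 * ∏ i ∈ Finset.range k, b (2*i+2)) * x := by
    rw [hx, Finset.sum_range_succ, Finset.sum_range_succ]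
    unfold zk
    exact S10.arith (∏ i ∈ Finset.range k, b (2*i+2)) (aSeq b (2*k+1))
      (∑ j ∈ Finset.range k, (b (2*j+2) - 1) * aSeq b (2*j+1))
      (∑ j ∈ Finset.range k, ε j * aSeq b (2*j+1))
      (∑ j ∈ Finset.range k, ε j * ∏ i ∈ Finset.range j, b (2*i+2))
      (∑ j ∈ Finset.range k, D j * ∏ i ∈ Finset.range j, b (2*i+2))
      (∑ j ∈ Finset.range k, D j * aSeq b (2*j+1))
      (ε k) hMQ hLT h1 hTW hεk
  have hkey : (countBelow (mixB b) x) * (zk b k) ≤ (countBelow (mixB b) (zk b k)) * x := by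
    rw [hBx, hBz, hRζ]
    exact hcore
  -- conclude over ℝ
  have hx0 : (0:ℝ) < x := by
    have : 1 ≤ x := le_trans hW1 hxW
    exact_mod_cast Nat.lt_of_lt_of_le Nat.zero_lt_one this
  have hz0 : (0:ℝ) < zk b k := by
    have : 1 ≤ zk b k := le_trans hW1 hzW
    exact_mod_cast Nat.lt_of_lt_of_le Nat.zero_lt_one this
  rw [hA, div_le_div_iff₀ hx0 hz0]
  have hcast : ((countBelow (mixB b) x : ℝ)) * (zk b k : ℕ)
      ≤ ((countBelow (mixB b) (zk b k) : ℝ)) * (x : ℕ) := by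
    exact_mod_cast hkey
  have hCA : (0:ℝ) ≤ (countBelow (mixA b) (zk b k) : ℝ) := Nat.cast_nonneg _
  nlinarith [mul_le_mul_of_nonneg_left hcast hCA]
end

section
/- Let a, b be integers with b > a ≥ 2 and b ≥ a + 2. The map sending a sequence {d_i} with each d_i ∈ {a, b} to Δ({d_i}) = lim_{j→+∞} Σ_{i=0}^{j} (−1)^i / (d_1 d_2 ⋯ d_i) is injective: if {d_i} and {d'_i} are different sequences with values in {a, b}, then Δ({d_i}) ≠ Δ({d'_i}). -/
open Filter Topology


private lemma prodpos (e : ℕ → ℕ) (he : ∀ i, 1 ≤ i → 2 ≤ e i) (i : ℕ) :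
    0 < ∏ t ∈ Finset.Icc 1 i, (e t : ℝ) := by
  apply Finset.prod_pos
  intro t ht
  have h := he t (Finset.mem_Icc.mp ht).1
  have : (2:ℝ) ≤ (e t : ℝ) := by exact_mod_cast h
  linarith

private lemma peel4 (g : ℕ → ℝ) (K : ℕ) : ∑ i ∈ Finset.range (K+4+1), g i =
    (∑ i ∈ Finset.range (K+1), g i) + g (K+1) + g (K+2) + g (K+3) + g (K+4) := by
  have h1 := Finset.sum_range_succ g (K+4)
  have h2 := Finset.sum_range_succ g (K+3)
  have h3 := Finset.sum_range_succ g (K+2)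
  have h4 := Finset.sum_range_succ g (K+1)
  have e2 : K+3+1 = K+4 := by omega
  have e3 : K+2+1 = K+3 := by omega
  have e4 : K+1+1 = K+2 := by omega
  rw [e2] at h2; rw [e3] at h3; rw [e4] at h4
  linarith

private lemma peel3 (g : ℕ → ℝ) (K : ℕ) : ∑ i ∈ Finset.range (K+3+1), g i =
    (∑ i ∈ Finset.range (K+1), g i) + g (K+1) + g (K+2) + g (K+3) := by
  have h2 := Finset.sum_range_succ g (K+3)
  have h3 := Finset.sum_range_succ g (K+2)
  have h4 := Finset.sum_range_succ g (K+1)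
  have e3 : K+2+1 = K+3 := by omega
  have e4 : K+1+1 = K+2 := by omega
  rw [e3] at h3; rw [e4] at h4
  linarith

private lemma alt_le (e : ℕ → ℕ) (he : ∀ i, 1 ≤ i → 2 ≤ e i) (L : ℝ)
    (hL : Tendsto (fun j : ℕ => ∑ i ∈ Finset.range (j + 1),
        (-1 : ℝ) ^ i / ∏ t ∈ Finset.Icc 1 i, (e t : ℝ)) atTop (𝓝 L)) (j : ℕ) :
    (-1 : ℝ) ^ (j+1) * ∑ i ∈ Finset.range (j + 1),
        (-1 : ℝ) ^ i / ∏ t ∈ Finset.Icc 1 i, (e t : ℝ) ≤ (-1 : ℝ) ^ (j+1) * L := by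
  set f : ℕ → ℝ := fun i => (-1 : ℝ) ^ i / ∏ t ∈ Finset.Icc 1 i, (e t : ℝ) with hf
  set S : ℕ → ℝ := fun m => ∑ i ∈ Finset.range (m + 1), f i with hS
  have hpos := prodpos e he
  have key : ∀ n : ℕ, (-1 : ℝ) ^ (j+1) * S j ≤ (-1 : ℝ) ^ (j+1) * S (j + 2*n) := by
    intro n
    induction n with
    | zero => simp
    | succ n ih =>
      set m := j + 2*n with hm
      have hexp : S (j + 2*(n+1)) = S m + f (m+1) + f (m+2) := by
        have h1 := Finset.sum_range_succ f (m+2)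
        have h2 := Finset.sum_range_succ f (m+1)
        have e1 : m+2+1 = j + 2*(n+1) + 1 := by omega
        have e2 : m+1+1 = m+2 := by omega
        rw [e1] at h1
        rw [e2] at h2
        simp only [hS]
        rw [h1, h2]
      have hsign1 : (-1 : ℝ) ^ (j+1) * (-1:ℝ) ^ (m+1) = 1 := by
        rw [← pow_add]
        exact Even.neg_one_pow ⟨j + n + 1, by omega⟩
      have hsign2 : (-1 : ℝ) ^ (j+1) * (-1:ℝ) ^ (m+2) = -1 := by
        rw [← pow_add]
        apply Odd.neg_one_pow
        exact ⟨j + n + 1, by omega⟩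
      have hprodle : ∏ t ∈ Finset.Icc 1 (m+1), (e t : ℝ) ≤ ∏ t ∈ Finset.Icc 1 (m+2), (e t : ℝ) := by
        rw [Finset.prod_Icc_succ_top (by omega : 1 ≤ m + 2)]
        have h2 : (2:ℝ) ≤ (e (m+2) : ℝ) := by exact_mod_cast he (m+2) (by omega)
        nlinarith [hpos (m+1)]
      have hterm : 0 ≤ (-1 : ℝ) ^ (j+1) * (f (m+1) + f (m+2)) := by
        have hA := hpos (m+1)
        have hB := hpos (m+2)
        have hinv : 1 / ∏ t ∈ Finset.Icc 1 (m+2), (e t : ℝ) ≤ 1 / ∏ t ∈ Finset.Icc 1 (m+1), (e t : ℝ) :=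
          one_div_le_one_div_of_le hA hprodle
        have e1 : (-1 : ℝ) ^ (j+1) * (f (m+1) + f (m+2))
            = 1 / ∏ t ∈ Finset.Icc 1 (m+1), (e t : ℝ) - 1 / ∏ t ∈ Finset.Icc 1 (m+2), (e t : ℝ) := by
          simp only [hf]
          have t1 : (-1 : ℝ) ^ (j+1) * ((-1:ℝ)^(m+1) / (∏ t ∈ Finset.Icc 1 (m+1), (e t : ℝ))
                + (-1:ℝ)^(m+2) / (∏ t ∈ Finset.Icc 1 (m+2), (e t : ℝ)))
              = ((-1:ℝ)^(j+1)*(-1:ℝ)^(m+1)) * (1 / ∏ t ∈ Finset.Icc 1 (m+1), (e t : ℝ))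
                + ((-1:ℝ)^(j+1)*(-1:ℝ)^(m+2)) * (1 / ∏ t ∈ Finset.Icc 1 (m+2), (e t : ℝ)) := by
            ring
          rw [t1, hsign1, hsign2]
          ring
        rw [e1]
        linarith
      calc (-1 : ℝ) ^ (j+1) * S j ≤ (-1 : ℝ) ^ (j+1) * S m := ih
        _ ≤ (-1 : ℝ) ^ (j+1) * S (j + 2*(n+1)) := by
            rw [hexp, mul_add, mul_add]
            nlinarith [hterm]
  have hsub : Tendsto (fun n : ℕ => j + 2*n) atTop atTop :=
    tendsto_atTop_atTop.mpr fun c => ⟨c, fun n hn => by omega⟩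
  have hlim : Tendsto (fun n : ℕ => (-1 : ℝ) ^ (j+1) * S (j + 2*n)) atTop
      (𝓝 ((-1 : ℝ) ^ (j+1) * L)) := (hL.comp hsub).const_mul _
  exact ge_of_tendsto' hlim key

private lemma arith (A B E₁ E₂ E₃ F₁ F₂ P : ℝ) (hA : 2 ≤ A) (hB : A + 2 ≤ B) (hP : 0 < P)
    (hE1 : A ≤ E₁) (hE2 : A ≤ E₂) (hE2' : E₂ ≤ B) (hE3 : A ≤ E₃)
    (hF1a : A ≤ F₁) (hF1 : F₁ ≤ B) (hF2 : A ≤ F₂) :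
    1/(P*B) - 1/(P*B*F₁) + 1/(P*B*F₁*F₂) <
      1/(P*A) - 1/(P*A*E₁) + 1/(P*A*E₁*E₂) - 1/(P*A*E₁*E₂*E₃) := by
  have hA0 : (0:ℝ) < A := by linarith
  have hB0 : (0:ℝ) < B := by linarith
  have hE10 : (0:ℝ) < E₁ := by linarith
  have hE20 : (0:ℝ) < E₂ := by linarith
  have hE30 : (0:ℝ) < E₃ := by linarith
  have hF10 : (0:ℝ) < F₁ := by linarith
  have hF20 : (0:ℝ) < F₂ := by linarith
  set c : ℝ := 1 - (1 - 1/A)/B with hc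
  have hiA : (0:ℝ) ≤ 1/A := by positivity
  have h1A : (0:ℝ) ≤ 1 - 1/A := by
    have : 1/A ≤ 1 := by rw [div_le_one hA0]; linarith
    linarith
  have hc0 : (0:ℝ) ≤ c := by
    have : (1 - 1/A)/B ≤ 1 := by
      rw [div_le_one hB0]; linarith
    simp only [hc]; linarith
  have inner_le : ∀ u v : ℝ, 0 < u → 0 < v → A ≤ u → v ≤ B → 1 - (1 - 1/u)/v ≤ c := by
    intro u v hu hv hAu hvB
    have h1 : 1/u ≤ 1/A := one_div_le_one_div_of_le hA0 hAu
    have h2 : (1 - 1/A)/B ≤ (1 - 1/u)/v := by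
      apply div_le_div₀ (by linarith) (by linarith) hv hvB
    simp only [hc]; linarith
  have inner_nonneg : ∀ u v : ℝ, 0 < u → 1 ≤ v → A ≤ u → 0 ≤ 1 - (1 - 1/u)/v := by
    intro u v hu hv hAu
    have hiu : (0:ℝ) ≤ 1/u := by positivity
    have h1 : (0:ℝ) ≤ 1 - 1/u := by
      have : 1/u ≤ 1 := by rw [div_le_one hu]; linarith
      linarith
    have : (1 - 1/u)/v ≤ 1 := by
      rw [div_le_one (by linarith)]; linarith
    linarith
  have final : c/B < (1 - c/A)/A := by
    set x : ℝ := 1/A with hx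
    set y : ℝ := 1/B with hy
    have hx0 : 0 < x := by positivity
    have hy0 : 0 < y := by positivity
    have hx2 : x ≤ 1/2 := one_div_le_one_div_of_le (by norm_num) hA
    have hxy : y + 2*x*y ≤ x := by
      have h : y ≤ 1/(A+2) := one_div_le_one_div_of_le (by linarith) hB
      have h2 : (0:ℝ) < 1 + 2*x := by linarith
      have h3 : y*(1+2*x) ≤ (1/(A+2))*(1+2*x) := by
        apply mul_le_mul_of_nonneg_right h h2.le
      have h4 : (1/(A+2))*(1+2*x) = x := by
        simp only [hx]; field_simp
      nlinarith
    have poly : (1 - (1-x)*y)*y < (1 - (1 - (1-x)*y)*x)*x := by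
      nlinarith [sq_nonneg (x - y), mul_pos hy0 hy0, sq_nonneg (1 - 2*x),
        mul_nonneg (mul_nonneg hy0.le hy0.le) hy0.le, mul_nonneg (sub_nonneg.2 hx2) hy0.le,
        mul_nonneg (sub_nonneg.2 hxy) hy0.le, mul_nonneg (sub_nonneg.2 hxy) hx0.le,
        mul_pos hx0 hy0]
    have e1 : c/B = (1 - (1-x)*y)*y := by simp only [hc, hx, hy]; ring
    have e2 : (1 - c/A)/A = (1 - (1 - (1-x)*y)*x)*x := by simp only [hc, hx, hy]; ring
    rw [e1, e2]; exact poly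
  have eY : 1/(P*B) - 1/(P*B*F₁) + 1/(P*B*F₁*F₂) = (1 - (1 - 1/F₂)/F₁)/(P*B) := by ring
  have eX : 1/(P*A) - 1/(P*A*E₁) + 1/(P*A*E₁*E₂) - 1/(P*A*E₁*E₂*E₃)
      = (1 - (1 - (1 - 1/E₃)/E₂)/E₁)/(P*A) := by ring
  rw [eY, eX]
  have hPB : (0:ℝ) < P*B := by positivity
  have hPA : (0:ℝ) < P*A := by positivity
  have Yle : (1 - (1 - 1/F₂)/F₁)/(P*B) ≤ c/(P*B) :=
    div_le_div₀ hc0 (inner_le F₂ F₁ hF20 hF10 hF2 hF1) hPB le_rfl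
  have hinE : 1 - (1 - 1/E₃)/E₂ ≤ c := inner_le E₃ E₂ hE30 hE20 hE3 hE2'
  have hinE0 : 0 ≤ 1 - (1 - 1/E₃)/E₂ := inner_nonneg E₃ E₂ hE30 (by linarith) hE3
  have hstep : (1 - (1 - 1/E₃)/E₂)/E₁ ≤ c/A := div_le_div₀ hc0 hinE hA0 hE1
  have hc1 : c ≤ 1 := by
    have : 0 ≤ (1 - 1/A)/B := div_nonneg h1A hB0.le
    simp only [hc]; linarith
  have hcA : c/A ≤ c := div_le_self hc0 (by linarith)
  have hN2 : 0 ≤ 1 - (1 - (1 - 1/E₃)/E₂)/E₁ := by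
    have hq : (1 - (1 - 1/E₃)/E₂)/E₁ ≤ 1 := by
      rw [div_le_one hE10]
      have h5 : 0 ≤ (1 - 1/E₃)/E₂ := by
        apply div_nonneg ?_ hE20.le
        have : 1/E₃ ≤ 1 := by rw [div_le_one hE30]; linarith
        linarith
      linarith
    linarith
  have Xge : (1 - c/A)/(P*A) ≤ (1 - (1 - (1 - 1/E₃)/E₂)/E₁)/(P*A) :=
    div_le_div₀ hN2 (by linarith) hPA le_rfl
  have mid : c/(P*B) < (1 - c/A)/(P*A) := by
    have m := mul_lt_mul_of_pos_left final (show (0:ℝ) < 1/P by positivity)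
    have r1 : (1/P)*(c/B) = c/(P*B) := by ring
    have r2 : (1/P)*((1 - c/A)/A) = (1 - c/A)/(P*A) := by ring
    linarith
  linarith

private lemma core (a b : ℕ) (ha : 2 ≤ a) (hb : a + 2 ≤ b)
    (d d' : ℕ → ℕ)
    (hd : ∀ i, 1 ≤ i → d i = a ∨ d i = b)
    (hd' : ∀ i, 1 ≤ i → d' i = a ∨ d' i = b)
    (K : ℕ) (hpre : ∀ i, 1 ≤ i → i ≤ K → d i = d' i)
    (hdk : d (K+1) = a) (hd'k : d' (K+1) = b)
    (Δ Δ' : ℝ)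
    (hΔ : Tendsto (fun j : ℕ => ∑ i ∈ Finset.range (j + 1),
        (-1 : ℝ) ^ i / ∏ t ∈ Finset.Icc 1 i, (d t : ℝ)) atTop (𝓝 Δ))
    (hΔ' : Tendsto (fun j : ℕ => ∑ i ∈ Finset.range (j + 1),
        (-1 : ℝ) ^ i / ∏ t ∈ Finset.Icc 1 i, (d' t : ℝ)) atTop (𝓝 Δ')) :
    Δ ≠ Δ' := by
  have hd2 : ∀ i, 1 ≤ i → 2 ≤ d i := fun i hi => by rcases hd i hi with h|h <;> omega
  have hd2' : ∀ i, 1 ≤ i → 2 ≤ d' i := fun i hi => by rcases hd' i hi with h|h <;> omega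
  have h1 := alt_le d hd2 Δ hΔ (K+4)
  have h2 := alt_le d' hd2' Δ' hΔ' (K+3)
  have hs4 : (-1:ℝ)^(K+4+1) = (-1:ℝ)^(K+1) := by
    rw [show K+4+1 = (K+1)+4 from by omega, pow_add]; norm_num
  have hs3 : (-1:ℝ)^(K+3+1) = -(-1:ℝ)^(K+1) := by
    rw [show K+3+1 = (K+1)+3 from by omega, pow_add]; norm_num
  rw [hs4] at h1
  rw [hs3] at h2
  -- notation
  set P : ℝ := ∏ t ∈ Finset.Icc 1 K, (d t : ℝ) with hP
  have hP0 : 0 < P := prodpos d hd2 K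
  have hPeq : ∏ t ∈ Finset.Icc 1 K, (d' t : ℝ) = P := by
    apply Finset.prod_congr rfl
    intro t ht
    obtain ⟨h1t, h2t⟩ := Finset.mem_Icc.mp ht
    rw [hpre t h1t h2t]
  set E₁ : ℝ := (d (K+2) : ℝ) with hE1d
  set E₂ : ℝ := (d (K+3) : ℝ) with hE2d
  set E₃ : ℝ := (d (K+4) : ℝ) with hE3d
  set F₁ : ℝ := (d' (K+2) : ℝ) with hF1d
  set F₂ : ℝ := (d' (K+3) : ℝ) with hF2d
  have hbound : ∀ e : ℕ → ℕ, (∀ i, 1 ≤ i → e i = a ∨ e i = b) → ∀ i, 1 ≤ i →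
      (a:ℝ) ≤ (e i : ℝ) ∧ (e i : ℝ) ≤ (b:ℝ) := by
    intro e he i hi
    have hab : (a:ℝ) ≤ (b:ℝ) := Nat.cast_le.mpr (by omega)
    rcases he i hi with h|h
    · rw [h]; exact ⟨le_rfl, hab⟩
    · rw [h]; exact ⟨hab, le_rfl⟩
  -- product expansions
  have hp1 : ∏ t ∈ Finset.Icc 1 (K+1), (d t : ℝ) = P * (a:ℝ) := by
    rw [Finset.prod_Icc_succ_top (by omega : 1 ≤ K+1), hdk, hP]
  have hp2 : ∏ t ∈ Finset.Icc 1 (K+2), (d t : ℝ) = P * (a:ℝ) * E₁ := by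
    rw [show K+2 = (K+1)+1 from by omega, Finset.prod_Icc_succ_top (by omega : 1 ≤ K+1+1), hp1]
  have hp3 : ∏ t ∈ Finset.Icc 1 (K+3), (d t : ℝ) = P * (a:ℝ) * E₁ * E₂ := by
    rw [show K+3 = (K+2)+1 from by omega, Finset.prod_Icc_succ_top (by omega : 1 ≤ K+2+1), hp2]
  have hp4 : ∏ t ∈ Finset.Icc 1 (K+4), (d t : ℝ) = P * (a:ℝ) * E₁ * E₂ * E₃ := by
    rw [show K+4 = (K+3)+1 from by omega, Finset.prod_Icc_succ_top (by omega : 1 ≤ K+3+1), hp3]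
  have hq1 : ∏ t ∈ Finset.Icc 1 (K+1), (d' t : ℝ) = P * (b:ℝ) := by
    rw [Finset.prod_Icc_succ_top (by omega : 1 ≤ K+1), hd'k, hPeq]
  have hq2 : ∏ t ∈ Finset.Icc 1 (K+2), (d' t : ℝ) = P * (b:ℝ) * F₁ := by
    rw [show K+2 = (K+1)+1 from by omega, Finset.prod_Icc_succ_top (by omega : 1 ≤ K+1+1), hq1]
  have hq3 : ∏ t ∈ Finset.Icc 1 (K+3), (d' t : ℝ) = P * (b:ℝ) * F₁ * F₂ := by
    rw [show K+3 = (K+2)+1 from by omega, Finset.prod_Icc_succ_top (by omega : 1 ≤ K+2+1), hq2]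
  -- shared initial sum
  have hshared : ∑ i ∈ Finset.range (K+1), ((-1 : ℝ) ^ i / ∏ t ∈ Finset.Icc 1 i, (d' t : ℝ))
      = ∑ i ∈ Finset.range (K+1), ((-1 : ℝ) ^ i / ∏ t ∈ Finset.Icc 1 i, (d t : ℝ)) := by
    apply Finset.sum_congr rfl
    intro i hi
    have hi' : i ≤ K := Nat.lt_succ_iff.mp (Finset.mem_range.mp hi)
    congr 1
    apply Finset.prod_congr rfl
    intro t ht
    obtain ⟨h1t, h2t⟩ := Finset.mem_Icc.mp ht
    rw [hpre t h1t (le_trans h2t hi')]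
  have hee : (-1:ℝ)^(K+1) * (-1:ℝ)^(K+1) = 1 := by
    rw [← pow_add]; exact Even.neg_one_pow ⟨K+1, by omega⟩
  have s2 : (-1:ℝ)^(K+2) = -(-1:ℝ)^(K+1) := by
    rw [show K+2 = (K+1)+1 from by omega, pow_succ]; ring
  have s3 : (-1:ℝ)^(K+3) = (-1:ℝ)^(K+1) := by
    rw [show K+3 = (K+1)+2 from by omega, pow_add]; norm_num
  have s4 : (-1:ℝ)^(K+4) = -(-1:ℝ)^(K+1) := by
    rw [show K+4 = (K+1)+3 from by omega, pow_add]; norm_num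
  have ed : ∑ i ∈ Finset.range (K+4+1), ((-1:ℝ)^i / ∏ t ∈ Finset.Icc 1 i, (d t:ℝ))
      = (∑ i ∈ Finset.range (K+1), ((-1:ℝ)^i / ∏ t ∈ Finset.Icc 1 i, (d t:ℝ)))
        + ((-1:ℝ)^(K+1) * (1/(P*(a:ℝ)) - 1/(P*(a:ℝ)*E₁) + 1/(P*(a:ℝ)*E₁*E₂) - 1/(P*(a:ℝ)*E₁*E₂*E₃))) := by
    rw [peel4 (fun i => (-1:ℝ)^i / ∏ t ∈ Finset.Icc 1 i, (d t:ℝ)) K]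
    simp only [hp1, hp2, hp3, hp4, s2, s3, s4]
    ring
  have ed' : ∑ i ∈ Finset.range (K+3+1), ((-1:ℝ)^i / ∏ t ∈ Finset.Icc 1 i, (d' t:ℝ))
      = (∑ i ∈ Finset.range (K+1), ((-1:ℝ)^i / ∏ t ∈ Finset.Icc 1 i, (d t:ℝ)))
        + ((-1:ℝ)^(K+1) * (1/(P*(b:ℝ)) - 1/(P*(b:ℝ)*F₁) + 1/(P*(b:ℝ)*F₁*F₂))) := by
    rw [peel3 (fun i => (-1:ℝ)^i / ∏ t ∈ Finset.Icc 1 i, (d' t:ℝ)) K]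
    simp only [hq1, hq2, hq3, s2, s3, s4]
    rw [hshared]
    ring
  have hcomp : 1/(P*(b:ℝ)) - 1/(P*(b:ℝ)*F₁) + 1/(P*(b:ℝ)*F₁*F₂) <
      1/(P*(a:ℝ)) - 1/(P*(a:ℝ)*E₁) + 1/(P*(a:ℝ)*E₁*E₂) - 1/(P*(a:ℝ)*E₁*E₂*E₃) := by
    apply arith _ _ _ _ _ _ _ _ (by exact_mod_cast ha)
      (by exact_mod_cast hb) hP0
      (hbound d hd (K+2) (by omega)).1
      (hbound d hd (K+3) (by omega)).1 (hbound d hd (K+3) (by omega)).2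
      (hbound d hd (K+4) (by omega)).1
      (hbound d' hd' (K+2) (by omega)).1 (hbound d' hd' (K+2) (by omega)).2
      (hbound d' hd' (K+3) (by omega)).1
  have key : (-1:ℝ)^(K+1) * ∑ i ∈ Finset.range (K+3+1), ((-1:ℝ)^i / ∏ t ∈ Finset.Icc 1 i, (d' t:ℝ))
      < (-1:ℝ)^(K+1) * ∑ i ∈ Finset.range (K+4+1), ((-1:ℝ)^i / ∏ t ∈ Finset.Icc 1 i, (d t:ℝ)) := by
    rw [ed, ed']
    set T := ∑ i ∈ Finset.range (K+1), ((-1:ℝ)^i / ∏ t ∈ Finset.Icc 1 i, (d t:ℝ)) with hT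
    set Qd := 1/(P*(a:ℝ)) - 1/(P*(a:ℝ)*E₁) + 1/(P*(a:ℝ)*E₁*E₂) - 1/(P*(a:ℝ)*E₁*E₂*E₃) with hQd
    set Qd' := 1/(P*(b:ℝ)) - 1/(P*(b:ℝ)*F₁) + 1/(P*(b:ℝ)*F₁*F₂) with hQd'
    have g1 : (-1:ℝ)^(K+1) * (T + ((-1:ℝ)^(K+1) * Qd)) = (-1:ℝ)^(K+1)*T + Qd := by
      linear_combination Qd * hee
    have g2 : (-1:ℝ)^(K+1) * (T + ((-1:ℝ)^(K+1) * Qd')) = (-1:ℝ)^(K+1)*T + Qd' := by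
      linear_combination Qd' * hee
    rw [g1, g2]
    linarith [hcomp]
  intro heq
  rw [heq] at h1
  linarith [h1, h2, key]

theorem stmt14 (a b : ℕ) (ha : 2 ≤ a) (hab : a < b) (hb : a + 2 ≤ b)
    (d d' : ℕ → ℕ)
    (hd : ∀ i, 1 ≤ i → d i = a ∨ d i = b)
    (hd' : ∀ i, 1 ≤ i → d' i = a ∨ d' i = b)
    (hne : ∃ i, 1 ≤ i ∧ d i ≠ d' i)
    (Δ Δ' : ℝ)
    (hΔ : Tendsto (fun j : ℕ => ∑ i ∈ Finset.range (j + 1),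
        (-1 : ℝ) ^ i / ∏ t ∈ Finset.Icc 1 i, (d t : ℝ)) atTop (𝓝 Δ))
    (hΔ' : Tendsto (fun j : ℕ => ∑ i ∈ Finset.range (j + 1),
        (-1 : ℝ) ^ i / ∏ t ∈ Finset.Icc 1 i, (d' t : ℝ)) atTop (𝓝 Δ')) :
    Δ ≠ Δ' := by
  classical
  obtain ⟨hk1, hkne⟩ := Nat.find_spec hne
  have hmin : ∀ i, 1 ≤ i → i < Nat.find hne → d i = d' i := fun i h1 h2 => by
    by_contra hcon
    exact Nat.find_min hne h2 ⟨h1, hcon⟩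
  obtain ⟨K, hK⟩ : ∃ K, Nat.find hne = K + 1 := ⟨Nat.find hne - 1, by omega⟩
  have hpre : ∀ i, 1 ≤ i → i ≤ K → d i = d' i := fun i h1 h2 => hmin i h1 (by omega)
  rw [hK] at hk1 hkne
  rcases hd (K+1) (by omega) with hka | hkb
  · have hkb' : d' (K+1) = b := by
      rcases hd' (K+1) (by omega) with h|h
      · exact absurd (hka.trans h.symm) hkne
      · exact h
    exact core a b ha hb d d' hd hd' K hpre hka hkb' Δ Δ' hΔ hΔ'
  · have hka' : d' (K+1) = a := by
      rcases hd' (K+1) (by omega) with h|h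
      · exact h
      · exact absurd (hkb.trans h.symm) hkne
    exact (core a b ha hb d' d hd' hd K (fun i h1 h2 => (hpre i h1 h2).symm) hka' hkb Δ' Δ hΔ' hΔ).symm
end

section
/- Let a, b, l be integers with b > a ≥ 2, b ≥ a + 2, and l a positive odd number. Let {b_j} (j ≥ 1) be the periodic sequence a, a, …, a (l times), b, a, a, …, a (l times), b, …, with b_0 = 1. Then lim_{k→+∞} D_{(l+1)k} = (1 − 1/a^{l+1}) / (b(1 + 1/a)(1 − 1/(a^l b))), where D_k = Σ_{i=0}^{k−1} (−1)^i (Π_{j=0}^{i} b_{k−j})^{−1}. -/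
open Filter Topology

lemma card_filter_dvd (m n : ℕ) :
    ((Finset.range (n + 1)).filter (fun j => m ∣ j)).card = n / m + 1 := by
  induction n with
  | zero => simp [Finset.filter_singleton]
  | succ n ih =>
    rw [Finset.range_add_one, Finset.filter_insert]
    by_cases h : m ∣ (n + 1)
    · rw [if_pos h, Finset.card_insert_of_notMem (by simp), ih, Nat.succ_div, if_pos h]
    · rw [if_neg h, ih, Nat.succ_div, if_neg h]

theorem stmt15 (a b l : ℕ) (ha : 2 ≤ a) (hab : a < b) (hb : a + 2 ≤ b)
    (hl : Odd l) (hl0 : 0 < l)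
    (bs : ℕ → ℕ) (hbs0 : bs 0 = 1)
    (hbs : ∀ j, 1 ≤ j → bs j = if (l + 1) ∣ j then b else a) :
    Tendsto (fun k : ℕ => Dk bs ((l + 1) * k)) atTop
      (𝓝 ((1 - 1 / (a : ℝ) ^ (l + 1)) /
        ((b : ℝ) * (1 + 1 / (a : ℝ)) * (1 - 1 / ((a : ℝ) ^ l * (b : ℝ)))))) := by
  have hA2 : (2 : ℝ) ≤ (a : ℝ) := by exact_mod_cast ha
  have hB4 : (4 : ℝ) ≤ (b : ℝ) := by
    have : (4 : ℕ) ≤ b := by omega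
    exact_mod_cast this
  have hA0 : (0 : ℝ) < a := by linarith
  have hB0 : (0 : ℝ) < b := by linarith
  have hAne : (a : ℝ) ≠ 0 := ne_of_gt hA0
  have hBne : (b : ℝ) ≠ 0 := ne_of_gt hB0
  have hAl : (2 : ℝ) ≤ (a : ℝ) ^ l :=
    le_trans hA2 (le_self_pow₀ (by linarith) hl0.ne')
  set t : ℝ := ((a : ℝ) ^ l * b)⁻¹ with ht_def
  have hden : (1 : ℝ) < (a : ℝ) ^ l * b := by nlinarith
  have ht0 : 0 ≤ t := by positivity
  have ht1 : t < 1 := by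
    rw [ht_def]
    exact inv_lt_one_of_one_lt₀ hden
  have hEven : Even (l + 1) := hl.add_one
  -- the per-term function
  set g : ℕ → ℝ := fun i =>
    (-1 : ℝ) ^ i * ((b : ℝ) ^ (i / (l + 1) + 1) * (a : ℝ) ^ (i - i / (l + 1)))⁻¹ with hg_def
  -- Step 1: rewrite Dk
  have hterm : ∀ K : ℕ, Dk bs ((l + 1) * K) = ∑ i ∈ Finset.range ((l + 1) * K), g i := by
    intro K
    unfold Dk
    refine Finset.sum_congr rfl fun i hi => ?_
    rw [Finset.mem_range] at hi
    have hprod : (∏ j ∈ Finset.range (i + 1), (bs ((l + 1) * K - j) : ℝ)) =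
        (b : ℝ) ^ (i / (l + 1) + 1) * (a : ℝ) ^ (i - i / (l + 1)) := by
      have hstep : ∀ j ∈ Finset.range (i + 1),
          (bs ((l + 1) * K - j) : ℝ) = if (l + 1) ∣ j then (b : ℝ) else (a : ℝ) := by
        intro j hj
        rw [Finset.mem_range] at hj
        have hjk : j < (l + 1) * K := lt_of_lt_of_le hj hi
        have h1 : 1 ≤ (l + 1) * K - j := by omega
        rw [hbs _ h1]
        have hdvd : (l + 1) ∣ ((l + 1) * K - j) ↔ (l + 1) ∣ j := by
          constructor
          · intro h
            have := Nat.dvd_sub (Dvd.intro K rfl) h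
            rwa [show (l + 1) * K - ((l + 1) * K - j) = j by omega] at this
          · intro h
            exact Nat.dvd_sub (Dvd.intro K rfl) h
        by_cases h : (l + 1) ∣ j
        · rw [if_pos ((hdvd).mpr h), if_pos h]
        · rw [if_neg (fun hc => h (hdvd.mp hc)), if_neg h]
      rw [Finset.prod_congr rfl hstep, Finset.prod_ite, Finset.prod_const, Finset.prod_const]
      have hc1 : ((Finset.range (i + 1)).filter (fun j => (l + 1) ∣ j)).card =
          i / (l + 1) + 1 := card_filter_dvd (l + 1) i
      have hcsum := Finset.card_filter_add_card_filter_not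
        (s := Finset.range (i + 1)) (p := fun j => (l + 1) ∣ j)
      rw [Finset.card_range] at hcsum
      have hdle : i / (l + 1) ≤ i := Nat.div_le_self _ _
      have hc2 : ((Finset.range (i + 1)).filter (fun j => ¬ (l + 1) ∣ j)).card =
          i - i / (l + 1) := by omega
      rw [hc1, hc2]
    rw [hprod]
  -- Step 2: group
  set S : ℝ := ∑ r ∈ Finset.range (l + 1), (-(a : ℝ)⁻¹) ^ r with hS_def
  have hblock : ∀ q r : ℕ, r < l + 1 →
      g ((l + 1) * q + r) = (-(a : ℝ)⁻¹) ^ r * ((b : ℝ)⁻¹ * t ^ q) := by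
    intro q r hr
    have hdiv : ((l + 1) * q + r) / (l + 1) = q := by
      rw [add_comm, Nat.add_mul_div_left _ _ (Nat.succ_pos l), Nat.div_eq_of_lt hr,
        Nat.zero_add]
    have hsub : (l + 1) * q + r - q = l * q + r := by
      rw [Nat.succ_mul]; omega
    have hsign : (-1 : ℝ) ^ ((l + 1) * q + r) = (-1 : ℝ) ^ r := by
      rw [pow_add, pow_mul, hEven.neg_one_pow, one_pow, one_mul]
    rw [hg_def]
    simp only [hsign, hdiv, hsub]
    have hpow1 : ((a : ℝ)) ^ (l * q + r) = ((a : ℝ) ^ l) ^ q * (a : ℝ) ^ r := by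
      rw [pow_add, pow_mul]
    rw [hpow1, pow_succ, ht_def, neg_pow]
    have hAlne : ((a : ℝ) ^ l) ≠ 0 := by positivity
    field_simp
    have e1 : (-(1 / (a:ℝ))) ^ r = (-1) ^ r * ((a:ℝ) ^ r)⁻¹ := by rw [neg_eq_neg_one_mul, mul_pow, one_div, inv_pow]
    rw [e1, one_pow, mul_one, div_pow, one_pow, mul_pow]
    field_simp
  have hgroup : ∀ K : ℕ, ∑ i ∈ Finset.range ((l + 1) * K), g i =
      ∑ q ∈ Finset.range K, S * (b : ℝ)⁻¹ * t ^ q := by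
    intro K
    induction K with
    | zero => simp
    | succ K ih =>
      have hinner : ∑ x ∈ Finset.range (l + 1), g ((l + 1) * K + x) =
          ∑ x ∈ Finset.range (l + 1), (-(a : ℝ)⁻¹) ^ x * ((b : ℝ)⁻¹ * t ^ K) :=
        Finset.sum_congr rfl fun x hx => hblock K x (Finset.mem_range.mp hx)
      rw [Nat.mul_succ, Finset.sum_range_add, ih, hinner, ← Finset.sum_mul, ← hS_def,
        Finset.sum_range_succ]
      ring
  -- Step 3: limit
  have hgeom : Tendsto (fun K : ℕ => ∑ q ∈ Finset.range K, t ^ q) atTop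
      (𝓝 ((1 - t)⁻¹)) := (hasSum_geometric_of_lt_one ht0 ht1).tendsto_sum_nat
  have hT : Tendsto (fun K : ℕ => ∑ q ∈ Finset.range K, S * (b : ℝ)⁻¹ * t ^ q) atTop
      (𝓝 (S * (b : ℝ)⁻¹ * (1 - t)⁻¹)) := by
    simp only [← Finset.mul_sum]
    exact hgeom.const_mul _
  have heq : (fun k : ℕ => Dk bs ((l + 1) * k)) =
      fun K : ℕ => ∑ q ∈ Finset.range K, S * (b : ℝ)⁻¹ * t ^ q := by
    funext K; rw [hterm K, hgroup K]
  rw [heq]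
  convert hT using 2
  -- value identification
  have hxne : (-(a : ℝ)⁻¹) ≠ 1 := by
    have : (0 : ℝ) < (a : ℝ)⁻¹ := by positivity
    linarith
  have hSpow : (-(a : ℝ)⁻¹) ^ (l + 1) = ((a : ℝ)⁻¹) ^ (l + 1) := hEven.neg_pow _
  have h1 : (1 : ℝ) + (a : ℝ)⁻¹ ≠ 0 := by
    have : (0 : ℝ) < (a : ℝ)⁻¹ := by positivity
    linarith
  have h3 : (1 : ℝ) - t ≠ 0 := by linarith
  have hSval : S = (1 - ((a : ℝ)⁻¹) ^ (l + 1)) / (1 + (a : ℝ)⁻¹) := by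
    have hgs : S = ((-(a : ℝ)⁻¹) ^ (l + 1) - 1) / (-(a : ℝ)⁻¹ - 1) := geom_sum_eq hxne (l + 1)
    have hne : -(a : ℝ)⁻¹ - 1 ≠ 0 := by
      have : (0 : ℝ) < (a : ℝ)⁻¹ := by positivity
      linarith
    rw [hgs, hSpow, div_eq_div_iff hne h1]
    ring
  have hrw1 : 1 / (a : ℝ) ^ (l + 1) = ((a : ℝ)⁻¹) ^ (l + 1) := by
    rw [one_div, inv_pow]
  have hrw2 : 1 / (a : ℝ) = (a : ℝ)⁻¹ := one_div _
  have hrw3 : 1 / ((a : ℝ) ^ l * (b : ℝ)) = t := by rw [one_div, ht_def]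
  rw [hrw1, hrw2, hrw3, hSval]
  field_simp
end
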